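/- arXiv:1403.8117 — 7 statements merged into one kernel-verified Lean document; each statement's English description precedes it below -/
import Mathlib

section
/- Let X be a real random variable (with IID copies X_1, X_2, ...), μ > 0, m ≥ 1, δ ∈ (0, 1/2], α > 1, and n_k = 2^{k-1}. For k ≥ 2 let A_k = ∪_{j=n_{k-1}}^{n_k - 1} {X_j > (μj + m)^{1-δ}} and let g(k) = (Ḡ(m + μ n_{k-1}) - Ḡ(m + μ n_k))/Ḡ(m + μ n_1), where Ḡ(t) = ∫_t^∞ (1+s)^{-α} ds. Assume the inequality: sup over z ∈ {μ·2^k : k ≥ 0} of 6(1 + 2z + m)^α P(X > (z + m)^{1-δ}) / ((α - 1)(m + 1)^{α-1} μ) ≤ 1. Then 3 P(A_k)/g(k) ≤ 1 for every k ≥ 2. -/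
open MeasureTheory ProbabilityTheory Filter Set

set_option maxHeartbeats 1000000

lemma shift_int (α t : ℝ) :
    ∫ s in Set.Ioi t, (1 + s) ^ (-α) = ∫ u in Set.Ioi (1 + t), u ^ (-α) := by
  have hmp : MeasurePreserving (fun x : ℝ => 1 + x) volume volume :=
    measurePreserving_add_left volume 1
  have hemb : MeasurableEmbedding (fun x : ℝ => 1 + x) :=
    (MeasurableEquiv.addLeft (1 : ℝ)).measurableEmbedding
  have hpre : (fun x : ℝ => 1 + x) ⁻¹' Set.Ioi (1 + t) = Set.Ioi t := by
    ext x; simp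
  rw [← hmp.setIntegral_preimage_emb hemb (fun u => u ^ (-α)) (Set.Ioi (1 + t)), hpre]

lemma rpow_diff_lb {α A B : ℝ} (hα : 1 < α) (hA : 0 < A) (hAB : A ≤ B) :
    (α - 1) * ((B - A) * B ^ (-α)) ≤ A ^ (1 - α) - B ^ (1 - α) := by
  have hB : 0 < B := lt_of_lt_of_le hA hAB
  have h0 : (0 : ℝ) ∉ Set.uIcc A B := notMem_uIcc_of_lt hA hB
  have hint : ∫ x in A..B, x ^ (-α) = (A ^ (1 - α) - B ^ (1 - α)) / (α - 1) := by
    rw [integral_rpow (Or.inr ⟨by intro h; nlinarith [h], h0⟩)]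
    have h1 : -α + 1 = 1 - α := by ring
    rw [h1]
    have h2 : (1:ℝ) - α ≠ 0 := by linarith
    have h3 : α - 1 ≠ 0 := by linarith
    field_simp
    ring
  have hmono : (B - A) * B ^ (-α) ≤ ∫ x in A..B, x ^ (-α) := by
    have hci : IntervalIntegrable (fun x : ℝ => B ^ (-α)) volume A B :=
      intervalIntegrable_const
    have hri : IntervalIntegrable (fun x : ℝ => x ^ (-α)) volume A B :=
      intervalIntegral.intervalIntegrable_rpow (Or.inr h0)
    have := intervalIntegral.integral_mono_on hAB hci hri (fun x hx => by
      exact Real.rpow_le_rpow_of_nonpos (lt_of_lt_of_le hA hx.1) hx.2 (by linarith))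
    simpa [smul_eq_mul, mul_comm] using this
  have := mul_le_mul_of_nonneg_left hmono (by linarith : (0:ℝ) ≤ α - 1)
  rw [hint] at this
  calc (α - 1) * ((B - A) * B ^ (-α)) ≤ (α - 1) * ((A ^ (1 - α) - B ^ (1 - α)) / (α - 1)) := this
    _ = A ^ (1 - α) - B ^ (1 - α) := by
        rw [mul_div_cancel₀ _ (by linarith : α - 1 ≠ 0)]


/-- Lemma `3P(A_k)/g(k) ≤ 1`: under the parameter inequality (C_I_1),
the large-jump event `A_k` satisfies `3 P(A_k)/g(k) ≤ 1` for every `k ≥ 2`. -/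
theorem three_prob_Ak_le_g
    {Ω : Type*} [MeasurableSpace Ω] (P : Measure Ω) [IsProbabilityMeasure P]
    (X : ℕ → Ω → ℝ) (hmeas : ∀ i, Measurable (X i))
    (hindep : iIndepFun X P)
    (hident : ∀ i, 1 ≤ i → IdentDistrib (X i) (X 1) P P)
    (μ m δ α : ℝ) (hμ : 0 < μ) (hm : 1 ≤ m)
    (hδ0 : 0 < δ) (hδ : δ ≤ 1 / 2) (hα : 1 < α)
    (n : ℕ → ℕ) (hn : ∀ k, 1 ≤ k → n k = 2 ^ (k - 1))
    (Gbar : ℝ → ℝ) (hG : ∀ t, Gbar t = ∫ s in Set.Ioi t, (1 + s) ^ (-α))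
    (g : ℕ → ℝ)
    (hg : ∀ k, 2 ≤ k →
      g k = (Gbar (m + μ * n (k - 1)) - Gbar (m + μ * n k)) / Gbar (m + μ * n 1))
    (A : ℕ → Set Ω)
    (hA : ∀ k, A k =
      ⋃ j ∈ Finset.Icc (n (k - 1)) (n k - 1), {ω | X j ω > (μ * j + m) ^ (1 - δ)})
    (hCI1 : ∀ j : ℕ,
      6 * (1 + 2 * (μ * 2 ^ j) + m) ^ α *
          (P {ω | X 1 ω > (μ * 2 ^ j + m) ^ (1 - δ)}).toReal /
        ((α - 1) * (m + 1) ^ (α - 1) * μ) ≤ 1) :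
    ∀ k, 2 ≤ k → 3 * (P (A k)).toReal / g k ≤ 1 := by
  intro k hk
  have hα1 : (0:ℝ) < α - 1 := by linarith
  have hα1' : α - 1 ≠ 0 := ne_of_gt hα1
  -- basic objects
  set N : ℕ := 2 ^ (k - 2) with hNdef
  have hN1 : 1 ≤ N := Nat.one_le_two_pow
  set Nr : ℝ := (N : ℝ) with hNrdef
  have hNr1 : (1:ℝ) ≤ Nr := by rw [hNrdef]; exact_mod_cast hN1
  have hNr0 : (0:ℝ) < Nr := lt_of_lt_of_le zero_lt_one hNr1
  set c : ℝ := (μ * Nr + m) ^ (1 - δ) with hcdef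
  set B : ℝ := 1 + m + μ * (2 * Nr) with hBdef
  set C : ℝ := 1 + m + μ with hCdef
  set A0 : ℝ := 1 + m + μ * Nr with hA0def
  set D : ℝ := (α - 1) * (m + 1) ^ (α - 1) * μ with hDdef
  set p : ℝ := (P {ω | X 1 ω > c}).toReal with hpdef
  have hmuN : 0 < μ * Nr + m := by nlinarith
  have hA0pos : 0 < A0 := by rw [hA0def]; nlinarith
  have hBpos : 0 < B := by rw [hBdef]; nlinarith
  have hCpos : 0 < C := by rw [hCdef]; nlinarith
  have hA0B : A0 ≤ B := by rw [hA0def, hBdef]; nlinarith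
  have hBapos : 0 < B ^ α := Real.rpow_pos_of_pos hBpos α
  have hDpos : 0 < D := by
    rw [hDdef]
    exact mul_pos (mul_pos hα1 (Real.rpow_pos_of_pos (by linarith) _)) hμ
  have hp0 : 0 ≤ p := ENNReal.toReal_nonneg
  -- n facts
  have hnk1 : n (k - 1) = N := by
    have e : k - 1 - 1 = k - 2 := by omega
    rw [hn (k-1) (by omega), e, ← hNdef]
  have hnk : n k = 2 * N := by
    have e : k - 1 = (k - 2) + 1 := by omega
    rw [hn k (by omega), e, pow_succ, ← hNdef, Nat.mul_comm]
  have hn1 : n 1 = 1 := by simpa using hn 1 le_rfl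
  -- step 2 : p ≤ D / (6 * B ^ α)
  have hNr2 : (2:ℝ) ^ (k - 2) = Nr := by rw [hNrdef, hNdef]; push_cast; ring
  have hple : p ≤ D / (6 * B ^ α) := by
    have h := hCI1 (k - 2)
    rw [hNr2] at h
    have hBe : 1 + 2 * (μ * Nr) + m = B := by rw [hBdef]; ring
    rw [hBe, ← hcdef, ← hpdef, div_le_one hDpos] at h
    rw [le_div_iff₀ (by positivity)]
    linarith
  -- step 1 : P(A k) ≤ N * p
  have hPA_en : P (A k) ≤ (N : ENNReal) * P {ω | X 1 ω > c} := by
    rw [hA k, hnk1, hnk]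
    refine (measure_biUnion_finset_le _ _).trans ?_
    have hcard : (Finset.Icc N (2 * N - 1)).card = N := by
      rw [Nat.card_Icc]; omega
    have hbound : ∀ j ∈ Finset.Icc N (2 * N - 1),
        P {ω | X j ω > (μ * j + m) ^ (1 - δ)} ≤ P {ω | X 1 ω > c} := by
      intro j hj
      rw [Finset.mem_Icc] at hj
      have h1j : 1 ≤ j := le_trans hN1 hj.1
      have hsub : {ω | X j ω > (μ * j + m) ^ (1 - δ)} ⊆ {ω | X j ω > c} := by
        intro ω hω
        simp only [Set.mem_setOf_eq] at hω ⊢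
        refine lt_of_le_of_lt ?_ hω
        rw [hcdef]
        apply Real.rpow_le_rpow (le_of_lt hmuN) ?_ (by linarith)
        have : Nr ≤ (j : ℝ) := by rw [hNrdef]; exact_mod_cast hj.1
        nlinarith
      have hid : P {ω | X j ω > c} = P {ω | X 1 ω > c} := by
        have h := (hident j h1j).measure_mem_eq (measurableSet_Ioi (a := c))
        simpa [Set.preimage, Set.mem_Ioi] using h
      exact (measure_mono hsub).trans_eq hid
    calc ∑ j ∈ Finset.Icc N (2 * N - 1), P {ω | X j ω > (μ * j + m) ^ (1 - δ)}
        ≤ (Finset.Icc N (2 * N - 1)).card • P {ω | X 1 ω > c} :=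
          Finset.sum_le_card_nsmul _ _ _ hbound
      _ = (N : ENNReal) * P {ω | X 1 ω > c} := by rw [hcard, nsmul_eq_mul]
  have hPA : (P (A k)).toReal ≤ Nr * p := by
    have hne : ((N : ENNReal) * P {ω | X 1 ω > c}) ≠ ⊤ :=
      ENNReal.mul_ne_top (ENNReal.natCast_ne_top N) (measure_ne_top P _)
    have h := ENNReal.toReal_mono hne hPA_en
    have h2 : ((N : ENNReal)).toReal = (N : ℝ) := by simp
    rwa [ENNReal.toReal_mul, h2, ← hNrdef, ← hpdef] at h
  -- step 3 : Gbar closed form and lower bound on g k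
  have hGform : ∀ t : ℝ, 0 < 1 + t → Gbar t = (1 + t) ^ (1 - α) / (α - 1) := by
    intro t ht
    rw [hG t, shift_int, integral_Ioi_rpow_of_lt (by linarith) ht]
    rw [show -α + 1 = 1 - α by ring]
    have h2 : (1:ℝ) - α ≠ 0 := by linarith
    field_simp
    ring
  have hCq : 0 < C ^ (α - 1) := Real.rpow_pos_of_pos hCpos _
  have hGa : Gbar (m + μ * (n (k-1) : ℝ)) = A0 ^ (1 - α) / (α - 1) := by
    rw [hnk1, ← hNrdef, hGform (m + μ * Nr) (by nlinarith)]
    have e1 : 1 + (m + μ * Nr) = A0 := by rw [hA0def]; ring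
    rw [e1]
  have hGb : Gbar (m + μ * (n k : ℝ)) = B ^ (1 - α) / (α - 1) := by
    rw [hnk]
    push_cast
    rw [← hNrdef, hGform (m + μ * (2 * Nr)) (by nlinarith)]
    have e2 : 1 + (m + μ * (2 * Nr)) = B := by rw [hBdef]; ring
    rw [e2]
  have hGc : Gbar (m + μ * (n 1 : ℝ)) = C ^ (1 - α) / (α - 1) := by
    have h1 : ((n 1 : ℕ) : ℝ) = 1 := by rw [hn1]; norm_num
    rw [h1, mul_one, hGform (m + μ) (by nlinarith)]
    have e3 : 1 + (m + μ) = C := by rw [hCdef]; ring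
    rw [e3]
  have hgkeq : g k = (A0 ^ (1 - α) - B ^ (1 - α)) * C ^ (α - 1) := by
    rw [hg k hk, hGa, hGb, hGc]
    rw [show (1 - α) = -(α - 1) by ring, Real.rpow_neg hCpos.le]
    have hCq' : C ^ (α - 1) ≠ 0 := ne_of_gt hCq
    field_simp
  have hdiff := rpow_diff_lb hα hA0pos hA0B
  have hBA : B - A0 = μ * Nr := by rw [hBdef, hA0def]; ring
  have hgL : (α - 1) * ((μ * Nr) * B ^ (-α)) * C ^ (α - 1) ≤ g k := by
    rw [hgkeq, ← hBA]
    exact mul_le_mul_of_nonneg_right hdiff hCq.le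
  have hBna : 0 < B ^ (-α) := Real.rpow_pos_of_pos hBpos _
  have hLpos : 0 < (α - 1) * ((μ * Nr) * B ^ (-α)) * C ^ (α - 1) := by positivity
  have hgkpos : 0 < g k := lt_of_lt_of_le hLpos hgL
  -- final assembly
  rw [div_le_one hgkpos]
  have hm1C : (m + 1:ℝ) ^ (α - 1) ≤ C ^ (α - 1) := by
    apply Real.rpow_le_rpow (by linarith) (by rw [hCdef]; linarith) hα1.le
  have hm1q : (0:ℝ) < (m + 1:ℝ) ^ (α - 1) := Real.rpow_pos_of_pos (by linarith) _
  have hBinv : B ^ (-α) = (B ^ α)⁻¹ := by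
    rw [Real.rpow_neg hBpos.le]
  have key : 3 * (Nr * (D / (6 * B ^ α))) ≤ (α - 1) * ((μ * Nr) * B ^ (-α)) * C ^ (α - 1) := by
    rw [hBinv, hDdef]
    have hx0 : (0:ℝ) ≤ (B ^ α)⁻¹ := inv_nonneg.mpr hBapos.le
    have hfac : (0:ℝ) ≤ (α - 1) * μ * Nr * (B ^ α)⁻¹ := by positivity
    have h5 := mul_le_mul_of_nonneg_left hm1C hfac
    have hLHS : 3 * (Nr * ((α - 1) * (m + 1) ^ (α - 1) * μ / (6 * B ^ α)))
        = ((α - 1) * μ * Nr * (B ^ α)⁻¹ * ((m + 1) ^ (α - 1))) / 2 := by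
      rw [div_eq_mul_inv, mul_inv]
      ring
    rw [hLHS]
    have hX0 : 0 ≤ (α - 1) * μ * Nr * (B ^ α)⁻¹ * ((m + 1) ^ (α - 1)) :=
      mul_nonneg hfac hm1q.le
    nlinarith [h5]
  calc 3 * (P (A k)).toReal ≤ 3 * (Nr * p) := by linarith
    _ ≤ 3 * (Nr * (D / (6 * B ^ α))) := by
        have := mul_le_mul_of_nonneg_left hple hNr0.le
        linarith
    _ ≤ (α - 1) * ((μ * Nr) * B ^ (-α)) * C ^ (α - 1) := key
    _ ≤ g k := hgL
end

section
/- Let (X_k : k ≥ 1) be IID copies of a real random variable X with E[X] = 0 and E[X²] < ∞, let μ > 0, m ≥ 1, δ ∈ (0, 1/2], α > 1, γ > 0, and n_k = 2^{k-1}. For k ≥ 2 set C_k = n_{k-1}μ + m, θ_k = γ/C_k^{1-δ}, ψ_k(θ_k) = log(E[exp(θ_k X) 1{X ≤ C_k^{1-δ}}]/P(X ≤ C_k^{1-δ})), T_m = inf{n ≥ 0 : S_n - μn > m}, and g(k) = (Ḡ(m + μ n_{k-1}) - Ḡ(m + μ n_k))/Ḡ(m + μ n_1) with Ḡ(t) =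 ∫_t^∞ (1+s)^{-α} ds. Assume E[X²]/m^{2(1-δ)} ≤ 1/2 and that for every z ∈ {μ·2^k : k ≥ 0}: exp(-γ(m+z)^δ + γ² e^γ E[X²] z/((m+z)^{2(1-δ)} μ) + 4(z/μ) P(X > (z+m)^{1-δ})) ≤ (α-1)(m+1)^{α-1}(1+2z+m)^{-α} z / 3. Then for every k ≥ 2, almost surely on the event {n_{k-1} ≤ T_m ≤ n_k - 1}, 3 exp(-θ_k S_{T_m} + T_m ψ_k(θ_k))/g(k) ≤ 1. -/
open MeasureTheory ProbabilityTheory Filter Set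


lemma aux_exp_quad (y c : ℝ) (hc : 0 < c) (h : y ≤ c) : Real.exp y ≤ 1 + y + y^2 * Real.exp c / 2 := by
  rcases le_or_gt y 0 with hy | hy
  · have key : Real.exp y ≤ 1 + y + y^2 / 2 := by
      have h1 : (0:ℝ) ≤ ∫ t in y..0, (Real.exp t - 1 - t) := by
        apply intervalIntegral.integral_nonneg hy
        intro t _
        have := Real.add_one_le_exp t
        linarith
      have hi1 : IntervalIntegrable (fun t => Real.exp t - 1) volume y 0 :=
        (Real.continuous_exp.sub continuous_const).intervalIntegrable _ _
      have hi2 : IntervalIntegrable (fun t : ℝ => t) volume y 0 :=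
        continuous_id.intervalIntegrable _ _
      have hi3 : IntervalIntegrable Real.exp volume y 0 :=
        Real.continuous_exp.intervalIntegrable _ _
      have hi4 : IntervalIntegrable (fun _ : ℝ => (1:ℝ)) volume y 0 :=
        continuous_const.intervalIntegrable _ _
      have h2 : (∫ t in y..0, (Real.exp t - 1 - t)) = 1 - Real.exp y + y + y^2/2 := by
        rw [intervalIntegral.integral_sub hi1 hi2, intervalIntegral.integral_sub hi3 hi4,
          integral_exp, intervalIntegral.integral_const, integral_id]
        simp
        ring
      nlinarith
    have : y^2/2 ≤ y^2 * Real.exp c / 2 := by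
      nlinarith [Real.one_le_exp (le_of_lt hc), sq_nonneg y]
    linarith
  · have key : Real.exp y - 1 - y ≤ y^2 * Real.exp y / 2 := by
      have h1 : (∫ t in (0:ℝ)..y, (Real.exp t - 1)) ≤ ∫ t in (0:ℝ)..y, t * Real.exp y := by
        apply intervalIntegral.integral_mono_on hy.le
        · exact (Real.continuous_exp.sub continuous_const).intervalIntegrable _ _
        · exact (continuous_id.mul continuous_const).intervalIntegrable _ _
        · intro t ht
          rcases ht with ⟨ht0, hty⟩
          have e1 : Real.exp t - 1 ≤ t * Real.exp t := by
            have := Real.add_one_le_exp (-t)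
            have h2 : (1 - t) * Real.exp t ≤ 1 := by
              have := Real.exp_pos t
              calc (1 - t) * Real.exp t ≤ Real.exp (-t) * Real.exp t := by nlinarith
                _ = 1 := by rw [← Real.exp_add]; simp
            nlinarith
          have e2 : t * Real.exp t ≤ t * Real.exp y := by
            apply mul_le_mul_of_nonneg_left _ ht0
            exact Real.exp_le_exp.mpr hty
          linarith
      have hi3 : IntervalIntegrable Real.exp volume 0 y :=
        Real.continuous_exp.intervalIntegrable _ _
      have hi4 : IntervalIntegrable (fun _ : ℝ => (1:ℝ)) volume 0 y :=
        continuous_const.intervalIntegrable _ _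
      have h2 : (∫ t in (0:ℝ)..y, (Real.exp t - 1)) = Real.exp y - 1 - y := by
        rw [intervalIntegral.integral_sub hi3 hi4, integral_exp, intervalIntegral.integral_const]
        simp
      have h3 : (∫ t in (0:ℝ)..y, t * Real.exp y) = y^2 * Real.exp y / 2 := by
        rw [intervalIntegral.integral_mul_const, integral_id]
        ring
      rw [h2, h3] at h1; linarith
    have : y^2 * Real.exp y / 2 ≤ y^2 * Real.exp c / 2 := by
      have := Real.exp_le_exp.mpr h
      nlinarith [sq_nonneg y]
    linarith

lemma aux_exp_neg2 {x : ℝ} (h0 : 0 ≤ x) (h : x ≤ 1/2) : Real.exp (-(2*x)) ≤ 1 - x := by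
  have h1 : 1 + 2*x ≤ Real.exp (2*x) := by have := Real.add_one_le_exp (2*x); linarith
  have hp : (0:ℝ) < 1 + 2*x := by linarith
  have h3 : Real.exp (-(2*x)) ≤ 1 / (1 + 2*x) := by
    rw [Real.exp_neg, inv_eq_one_div]
    apply one_div_le_one_div_of_le hp h1
  have h4 : 1 / (1 + 2*x) ≤ 1 - x := by
    rw [div_le_iff₀ hp]; nlinarith
  linarith


lemma aux_int_one_add (α t : ℝ) (hα : 1 < α) (ht : 0 ≤ t) :
    IntegrableOn (fun s : ℝ => (1 + s) ^ (-α)) (Ioi t) := by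
  have h1 : Integrable (fun x : ℝ => (1 + ‖x‖) ^ (-α)) := by
    apply integrable_one_add_norm (μ := volume)
    simpa using hα
  apply (h1.integrableOn).congr_fun _ measurableSet_Ioi
  intro x hx
  have hx0 : 0 < x := lt_of_le_of_lt ht hx
  simp only [Real.norm_eq_abs, abs_of_pos hx0]

lemma aux_Gbar (α t : ℝ) (hα : 1 < α) (ht : 0 ≤ t) :
    (∫ s in Set.Ioi t, (1 + s) ^ (-α)) = (1 + t) ^ (1 - α) / (α - 1) := by
  have hne : α - 1 ≠ 0 := by linarith
  have hderiv : ∀ x ∈ Ici t, HasDerivAt (fun x : ℝ => -(1 + x) ^ (1 - α) / (α - 1))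
      ((1 + x) ^ (-α)) x := by
    intro x hx
    have hx0 : (0:ℝ) < 1 + x := by have : t ≤ x := hx; linarith
    have h1 : HasDerivAt (fun x : ℝ => 1 + x) 1 x := by
      simpa using (hasDerivAt_id x).const_add 1
    have h2 : HasDerivAt (fun x : ℝ => (1 + x) ^ (1 - α))
        ((1 - α) * (1 + x) ^ (1 - α - 1) * 1) x := by
      exact (Real.hasDerivAt_rpow_const (Or.inl (ne_of_gt hx0))).comp x h1
    have h3 := (h2.neg).div_const (α - 1)
    simp only [Pi.neg_apply] at h3
    refine h3.congr_deriv ?_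
    have : (1:ℝ) - α - 1 = -α := by ring
    rw [this]
    field_simp
    ring
  have htend : Tendsto (fun x : ℝ => -(1 + x) ^ (1 - α) / (α - 1)) atTop (nhds 0) := by
    have h1 : Tendsto (fun x : ℝ => (1 + x)) atTop atTop := tendsto_atTop_add_const_left _ 1 tendsto_id
    have h2 : Tendsto (fun x : ℝ => (1 + x) ^ (-(α - 1))) atTop (nhds 0) :=
      (tendsto_rpow_neg_atTop (by linarith)).comp h1
    have h3 : Tendsto (fun x : ℝ => -(1 + x) ^ (1 - α) / (α - 1)) atTop (nhds (-0 / (α - 1))) := by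
      apply Tendsto.div_const
      apply Tendsto.neg
      convert h2 using 2 with x
      ring_nf
    simpa using h3
  have := MeasureTheory.integral_Ioi_of_hasDerivAt_of_tendsto' hderiv (aux_int_one_add α t hα ht) htend
  rw [this]
  field_simp
  ring

lemma aux_rpow_diff (α u v : ℝ) (hα : 1 < α) (hu : 0 < u) (huv : u ≤ v) :
    (v - u) * v ^ (-α) ≤ (u ^ (1 - α) - v ^ (1 - α)) / (α - 1) := by
  have hv : 0 < v := lt_of_lt_of_le hu huv
  have h0 : (0:ℝ) ∉ uIcc u v := by
    rw [Set.uIcc_of_le huv]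
    intro h0
    exact absurd h0.1 (not_le.mpr hu)
  have hval : (∫ x in u..v, x ^ (-α)) = (u ^ (1 - α) - v ^ (1 - α)) / (α - 1) := by
    rw [integral_rpow (Or.inr ⟨by linarith, h0⟩)]
    have e : -α + 1 = 1 - α := by ring
    rw [e]
    rw [div_eq_div_iff (by linarith) (by linarith)]
    ring
  have hmono : (∫ x in u..v, (v:ℝ) ^ (-α)) ≤ ∫ x in u..v, x ^ (-α) := by
    apply intervalIntegral.integral_mono_on huv
    · exact continuous_const.intervalIntegrable _ _
    · apply (ContinuousOn.intervalIntegrable)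
      apply ContinuousOn.rpow_const
      · exact continuousOn_id
      · intro x hx
        rw [Set.uIcc_of_le huv] at hx
        exact Or.inl (ne_of_gt (lt_of_lt_of_le hu hx.1))
    · intro x hx
      apply Real.rpow_le_rpow_of_nonpos (lt_of_lt_of_le hu hx.1) hx.2 (by linarith)
  rw [intervalIntegral.integral_const, hval] at hmono
  simpa using hmono

lemma aux_psi {Ω : Type*} [MeasurableSpace Ω] (P : Measure Ω) [IsProbabilityMeasure P]
    (Y : Ω → ℝ) (hY : Measurable Y) (hint : Integrable Y P) (hmean : ∫ ω, Y ω ∂P = 0)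
    (hsq : Integrable (fun ω => Y ω ^ 2) P)
    (θ γ c : ℝ) (hθ : 0 < θ) (hγ : 0 < γ) (hc : 0 < c) (hθc : θ * c = γ)
    (hq : (P {ω | Y ω > c}).toReal ≤ 1 / 2) :
    Real.log ((∫ ω in {ω | Y ω ≤ c}, Real.exp (θ * Y ω) ∂P) / (P {ω | Y ω ≤ c}).toReal)
      ≤ θ ^ 2 * Real.exp γ * (∫ ω, Y ω ^ 2 ∂P) / 2 + 2 * (P {ω | Y ω > c}).toReal := by
  set s : Set Ω := {ω | Y ω ≤ c} with hs_def
  have hs : MeasurableSet s := measurableSet_le hY measurable_const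
  have hsc : sᶜ = {ω | Y ω > c} := by
    ext ω; simp [hs_def, not_le]
  set Pc := (P s).toReal with hPc_def
  set q := (P {ω | Y ω > c}).toReal with hq_def
  have hsum : Pc + q = 1 := by
    have h1 := measure_add_measure_compl (μ := P) hs
    rw [hsc, measure_univ] at h1
    have h2 := congrArg ENNReal.toReal h1
    rw [ENNReal.toReal_add (measure_ne_top P s) (measure_ne_top P _)] at h2
    simpa using h2
  have hq0 : 0 ≤ q := by rw [hq_def]; exact ENNReal.toReal_nonneg
  have hPc : 1/2 ≤ Pc := by linarith
  have hPc0 : 0 < Pc := by linarith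
  set M := ∫ ω, Y ω ^ 2 ∂P with hM_def
  have hM0 : 0 ≤ M := by rw [hM_def]; exact integral_nonneg (fun ω => sq_nonneg _)
  -- integrability of exp on s
  have hbd : ∀ ω ∈ s, θ * Y ω ≤ γ := by
    intro ω hω
    have : Y ω ≤ c := hω
    calc θ * Y ω ≤ θ * c := mul_le_mul_of_nonneg_left this hθ.le
      _ = γ := hθc
  have hIexp : IntegrableOn (fun ω => Real.exp (θ * Y ω)) s P := by
    apply Measure.integrableOn_of_bounded (M := Real.exp γ) (measure_ne_top P s)
    · exact (Real.measurable_exp.comp (hY.const_mul θ)).aestronglyMeasurable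
    · rw [ae_restrict_iff' hs]
      filter_upwards with ω hω
      rw [Real.norm_eq_abs, abs_of_pos (Real.exp_pos _)]
      exact Real.exp_le_exp.mpr (hbd ω hω)
  set I := ∫ ω in s, Real.exp (θ * Y ω) ∂P with hI_def
  have hIpos : 0 < I := by
    rw [hI_def, setIntegral_pos_iff_support_of_nonneg_ae _ hIexp]
    · have hsupp : Function.support (fun ω => Real.exp (θ * Y ω)) = univ := by
        ext ω; simp [Function.support, ne_of_gt (Real.exp_pos _)]
      rw [hsupp, univ_inter]
      have : P s ≠ 0 := by
        intro h0
        rw [hPc_def, h0] at hPc0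
        simp at hPc0
      exact pos_iff_ne_zero.mpr this
    · filter_upwards with ω using (Real.exp_pos _).le
  -- upper bound on I
  have hgA : IntegrableOn (fun ω => 1 + θ * Y ω) s P :=
    (integrable_const 1).integrableOn.add (hint.const_mul θ).integrableOn
  have hgB : IntegrableOn (fun ω => (θ^2 * Real.exp γ / 2) * Y ω ^ 2) s P :=
    (hsq.const_mul _).integrableOn
  have hg_int : IntegrableOn (fun ω => 1 + θ * Y ω + (θ^2 * Real.exp γ / 2) * Y ω ^ 2) s P :=
    hgA.add hgB
  have hIle1 : I ≤ ∫ ω in s, (1 + θ * Y ω + (θ^2 * Real.exp γ / 2) * Y ω ^ 2) ∂P := by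
    apply setIntegral_mono_on hIexp hg_int hs
    intro ω hω
    have h1 := aux_exp_quad (θ * Y ω) γ hγ (hbd ω hω)
    have : (θ * Y ω)^2 * Real.exp γ / 2 = (θ^2 * Real.exp γ / 2) * Y ω ^ 2 := by ring
    linarith [this ▸ h1]
  have hsplit : (∫ ω in s, (1 + θ * Y ω + (θ^2 * Real.exp γ / 2) * Y ω ^ 2) ∂P)
      = Pc + θ * (∫ ω in s, Y ω ∂P) + (θ^2 * Real.exp γ / 2) * (∫ ω in s, Y ω ^ 2 ∂P) := by
    have e1 : (∫ ω in s, (1 + θ * Y ω + (θ^2 * Real.exp γ / 2) * Y ω ^ 2) ∂P)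
        = (∫ ω in s, (1 + θ * Y ω) ∂P) + ∫ ω in s, (θ^2 * Real.exp γ / 2) * Y ω ^ 2 ∂P :=
      integral_add hgA hgB
    have e2 : (∫ ω in s, (1 + θ * Y ω) ∂P)
        = (∫ _ in s, (1:ℝ) ∂P) + ∫ ω in s, θ * Y ω ∂P :=
      integral_add (integrable_const 1).integrableOn (hint.const_mul θ).integrableOn
    rw [e1, e2, setIntegral_const, integral_const_mul, integral_const_mul]
    simp [hPc_def, measureReal_def]
  have hYneg : (∫ ω in s, Y ω ∂P) ≤ 0 := by
    have h1 : (∫ ω in s, Y ω ∂P) + (∫ ω in sᶜ, Y ω ∂P) = 0 := by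
      rw [integral_add_compl hs hint, hmean]
    have h2 : 0 ≤ ∫ ω in sᶜ, Y ω ∂P := by
      apply setIntegral_nonneg hs.compl
      intro ω hω
      have : c < Y ω := by
        have := hω
        simpa [hs_def, not_le] using this
      linarith
    linarith
  have hY2 : (∫ ω in s, Y ω ^ 2 ∂P) ≤ M := by
    apply setIntegral_le_integral hsq
    filter_upwards with ω using sq_nonneg _
  have hIle : I ≤ 1 + θ^2 * Real.exp γ * M / 2 := by
    have h1 : Pc ≤ 1 := by linarith
    have h2 : θ * (∫ ω in s, Y ω ∂P) ≤ 0 := mul_nonpos_of_nonneg_of_nonpos hθ.le hYneg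
    have h3 : (θ^2 * Real.exp γ / 2) * (∫ ω in s, Y ω ^ 2 ∂P) ≤ (θ^2 * Real.exp γ / 2) * M := by
      apply mul_le_mul_of_nonneg_left hY2
      positivity
    calc I ≤ _ := hIle1
      _ = Pc + θ * (∫ ω in s, Y ω ∂P) + (θ^2 * Real.exp γ / 2) * (∫ ω in s, Y ω ^ 2 ∂P) := hsplit
      _ ≤ 1 + 0 + (θ^2 * Real.exp γ / 2) * M := by gcongr <;> linarith
      _ = 1 + θ^2 * Real.exp γ * M / 2 := by ring
  -- conclude
  have hlogI : Real.log I ≤ θ^2 * Real.exp γ * M / 2 := by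
    have h1 : Real.log I ≤ Real.log (1 + θ^2 * Real.exp γ * M / 2) := Real.log_le_log hIpos hIle
    have h2 : Real.log (1 + θ^2 * Real.exp γ * M / 2) ≤ θ^2 * Real.exp γ * M / 2 := by
      have := Real.log_le_sub_one_of_pos (x := 1 + θ^2 * Real.exp γ * M / 2) (by positivity)
      linarith
    linarith
  have hlogPc : -(2*q) ≤ Real.log Pc := by
    have h1 : Real.exp (-(2*q)) ≤ Pc := by
      have := aux_exp_neg2 hq0 hq
      linarith
    have h2 := Real.log_le_log (Real.exp_pos _) h1
    rwa [Real.log_exp] at h2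
  rw [Real.log_div (ne_of_gt hIpos) (ne_of_gt hPc0)]
  linarith

set_option maxHeartbeats 1600000 in
/-- Lemma `3 exp(-θ_k S_{T_m} + T_m ψ_k(θ_k))/g(k) ≤ 1`: under (C_m_3) and
(C_I_2), on the event `{n_{k-1} ≤ T_m ≤ n_k - 1}` the tilted likelihood ratio bound holds. -/
theorem three_tilted_likelihood_ratio_le_g
    {Ω : Type*} [MeasurableSpace Ω] (P : Measure Ω) [IsProbabilityMeasure P]
    (X : ℕ → Ω → ℝ) (hmeas : ∀ i, Measurable (X i))
    (hindep : iIndepFun X P)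
    (hident : ∀ i, 1 ≤ i → IdentDistrib (X i) (X 1) P P)
    (hint : Integrable (X 1) P) (hmean : ∫ ω, X 1 ω ∂P = 0)
    (hsq : Integrable (fun ω => (X 1 ω) ^ 2) P)
    (μ m δ α γ : ℝ) (hμ : 0 < μ) (hm : 1 ≤ m)
    (hδ0 : 0 < δ) (hδ : δ ≤ 1 / 2) (hα : 1 < α) (hγ : 0 < γ)
    (n : ℕ → ℕ) (hn : ∀ k, 1 ≤ k → n k = 2 ^ (k - 1))
    (C θ ψ : ℕ → ℝ)
    (hC : ∀ k, 2 ≤ k → C k = (n (k - 1) : ℝ) * μ + m)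
    (hθ : ∀ k, 2 ≤ k → θ k = γ / (C k) ^ (1 - δ))
    (hψ : ∀ k, 2 ≤ k → ψ k =
      Real.log ((∫ ω in {ω | X 1 ω ≤ (C k) ^ (1 - δ)}, Real.exp (θ k * X 1 ω) ∂P) /
        (P {ω | X 1 ω ≤ (C k) ^ (1 - δ)}).toReal))
    (Sraw : ℕ → Ω → ℝ)
    (hSraw : ∀ nn ω, Sraw nn ω = ∑ i ∈ Finset.Icc 1 nn, X i ω)
    (Tm : Ω → ℕ∞)
    (hTm : ∀ ω, Tm ω =
      sInf ((fun nn : ℕ => (nn : ℕ∞)) '' {nn : ℕ | Sraw nn ω - μ * nn > m}))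
    (Gbar : ℝ → ℝ) (hG : ∀ t, Gbar t = ∫ s in Set.Ioi t, (1 + s) ^ (-α))
    (g : ℕ → ℝ)
    (hg : ∀ k, 2 ≤ k →
      g k = (Gbar (m + μ * n (k - 1)) - Gbar (m + μ * n k)) / Gbar (m + μ * n 1))
    (hCm3 : (∫ ω, (X 1 ω) ^ 2 ∂P) / m ^ (2 * (1 - δ)) ≤ 1 / 2)
    (hCI2 : ∀ j : ℕ,
      Real.exp (-γ * (m + μ * 2 ^ j) ^ δ +
          γ ^ 2 * Real.exp γ * (∫ ω, (X 1 ω) ^ 2 ∂P) * (μ * 2 ^ j) /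
            ((m + μ * 2 ^ j) ^ (2 * (1 - δ)) * μ) +
          4 * ((μ * 2 ^ j) / μ) *
            (P {ω | X 1 ω > (μ * 2 ^ j + m) ^ (1 - δ)}).toReal) ≤
        (α - 1) * (m + 1) ^ (α - 1) * (1 + 2 * (μ * 2 ^ j) + m) ^ (-α) *
          (μ * 2 ^ j) / 3) :
    ∀ k, 2 ≤ k → ∀ᵐ ω ∂P,
      ((n (k - 1) : ℕ∞) ≤ Tm ω ∧ Tm ω ≤ ((n k - 1 : ℕ) : ℕ∞)) →
        3 * Real.exp (-(θ k) * Sraw (Tm ω).toNat ω + ((Tm ω).toNat : ℝ) * ψ k) /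
          g k ≤ 1 := by
  intro k hk
  apply Filter.Eventually.of_forall
  rintro ω ⟨hev1, hev2⟩
  -- basic numerology
  have hk1 : 1 ≤ k - 1 := by omega
  have hnk1 : n (k - 1) = 2 ^ (k - 2) := by
    rw [hn (k-1) hk1, show k-1-1 = k-2 from by omega]
  have hnk : n k = 2 ^ (k - 1) := hn k (by omega)
  have hn1 : n 1 = 1 := by rw [hn 1 le_rfl]; norm_num
  set M : ℝ := ∫ ω, (X 1 ω) ^ 2 ∂P with hM_def
  clear_value M
  have hM0 : 0 ≤ M := by rw [hM_def]; exact integral_nonneg (fun ω => sq_nonneg _)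
  set z : ℝ := μ * 2 ^ (k - 2) with hz_def
  clear_value z
  have hzpos : 0 < z := by rw [hz_def]; positivity
  have hCk : C k = m + z := by
    rw [hC k hk, hnk1, hz_def]
    push_cast
    ring
  have hCkpos : 0 < C k := by rw [hCk]; linarith
  have hmCk : m ≤ C k := by rw [hCk]; linarith
  have h1δ : (0:ℝ) < 1 - δ := by linarith
  set c : ℝ := (C k) ^ (1 - δ) with hc_def
  clear_value c
  have hc0 : 0 < c := by rw [hc_def]; exact Real.rpow_pos_of_pos hCkpos _
  have hθk : θ k = γ / c := by rw [hθ k hk, ← hc_def]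
  have hθpos : 0 < θ k := by rw [hθk]; positivity
  have hθc : θ k * c = γ := by rw [hθk]; field_simp
  -- c^2 = C k ^ (2*(1-δ))
  set W : ℝ := (C k) ^ (2 * (1 - δ)) with hW_def
  clear_value W
  have hWpos : 0 < W := by rw [hW_def]; exact Real.rpow_pos_of_pos hCkpos _
  have hc2W : c ^ 2 = W := by
    rw [hc_def, hW_def, ← Real.rpow_natCast ((C k) ^ (1-δ)) 2, ← Real.rpow_mul hCkpos.le]
    norm_num [mul_comm]
  -- Chebyshev : q ≤ 1/2
  set q : ℝ := (P {ω | X 1 ω > c}).toReal with hq_def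
  clear_value q
  have hq0 : 0 ≤ q := by rw [hq_def]; exact ENNReal.toReal_nonneg
  have hu : MeasurableSet {ω | X 1 ω > c} := measurableSet_lt measurable_const (hmeas 1)
  have hcheb : q * c ^ 2 ≤ M := by
    rw [hq_def, hM_def]
    have h1 : (∫ _ in {ω | X 1 ω > c}, (c^2 : ℝ) ∂P) ≤ ∫ ω in {ω | X 1 ω > c}, X 1 ω ^ 2 ∂P := by
      apply setIntegral_mono_on (integrable_const _).integrableOn hsq.integrableOn hu
      intro ω hω
      have hcle : c < X 1 ω := hω
      exact pow_le_pow_left₀ hc0.le hcle.le 2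
    have h2 : (∫ ω in {ω | X 1 ω > c}, X 1 ω ^ 2 ∂P) ≤ ∫ ω, (X 1 ω) ^ 2 ∂P := by
      apply setIntegral_le_integral hsq
      filter_upwards with ω using sq_nonneg _
    rw [setIntegral_const, smul_eq_mul] at h1
    exact le_trans h1 h2
  have hm2 : m ^ (2 * (1 - δ)) ≤ c ^ 2 := by
    rw [hc2W, hW_def]
    exact Real.rpow_le_rpow (by linarith) hmCk (by linarith)
  have hmpow_pos : (0:ℝ) < m ^ (2 * (1 - δ)) := Real.rpow_pos_of_pos (by linarith) _
  have hMle : M ≤ m ^ (2 * (1 - δ)) / 2 := by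
    rw [div_le_iff₀ hmpow_pos] at hCm3
    linarith
  have hq12 : q ≤ 1 / 2 := by
    have hc2pos : (0:ℝ) < c ^ 2 := pow_pos hc0 2
    have h6 : c ^ 2 * q ≤ c ^ 2 * (1/2) := by linarith [hcheb, hMle, hm2]
    exact le_of_mul_le_mul_left h6 hc2pos
  -- ψ bound
  have hψub : ψ k ≤ θ k ^ 2 * Real.exp γ * M / 2 + 2 * q := by
    rw [hψ k hk, ← hc_def]
    have hq12' : (P {ω | X 1 ω > c}).toReal ≤ 1/2 := by rw [← hq_def]; exact hq12
    have h0 := aux_psi P (X 1) (hmeas 1) hint hmean hsq (θ k) γ c hθpos hγ hc0 hθc hq12'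
    rw [← hM_def, ← hq_def] at h0
    exact h0
  -- stopping time analysis
  set B : Set ℕ := {nn : ℕ | Sraw nn ω - μ * nn > m} with hB_def
  have hTne : Tm ω ≠ ⊤ := ne_top_of_le_ne_top (WithTop.coe_ne_top) hev2
  set t : ℕ := (Tm ω).toNat with ht_def
  have hTt : (t : ℕ∞) = Tm ω := ENat.coe_toNat hTne
  have hBne : B.Nonempty := by
    by_contra hBe
    rw [Set.not_nonempty_iff_eq_empty] at hBe
    have : Tm ω = ⊤ := by rw [hTm ω, ← hB_def, hBe, Set.image_empty, sInf_empty]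
    exact hTne this
  have hsInfB : Tm ω = ((sInf B : ℕ) : ℕ∞) := by
    rw [hTm ω, ← hB_def]
    apply le_antisymm
    · exact sInf_le ⟨sInf B, Nat.sInf_mem hBne, rfl⟩
    · apply le_sInf
      rintro x ⟨b, hb, rfl⟩
      exact Nat.cast_le.mpr (Nat.sInf_le hb)
  have htB : t ∈ B := by
    have : t = sInf B := by
      have := hTt.trans hsInfB
      exact_mod_cast this
    rw [this]
    exact Nat.sInf_mem hBne
  have hS : μ * t + m < Sraw t ω := by
    have : Sraw t ω - μ * t > m := htB
    linarith
  -- bounds on t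
  have htlow : n (k - 1) ≤ t := by
    have : ((n (k-1) : ℕ) : ℕ∞) ≤ (t : ℕ∞) := by rw [hTt]; exact hev1
    exact_mod_cast this
  have hthigh : t ≤ n k - 1 := by
    have : (t : ℕ∞) ≤ ((n k - 1 : ℕ) : ℕ∞) := by rw [hTt]; exact hev2
    exact_mod_cast this
  have hpow21 : (2:ℝ) ^ (k-1) = 2 * 2 ^ (k-2) := by
    rw [show k-1 = (k-2)+1 from by omega, pow_succ]; ring
  have ht_low : (2:ℝ) ^ (k-2) ≤ (t:ℝ) := by
    have : ((2:ℕ) ^ (k-2) : ℕ) ≤ t := by rw [← hnk1]; exact htlow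
    exact_mod_cast this
  have ht_high : (t:ℝ) ≤ 2 * 2 ^ (k-2) := by
    have h1 : t ≤ 2 ^ (k-1) - 1 := by rw [← hnk]; exact hthigh
    have h2 : (t:ℝ) ≤ ((2 ^ (k-1) - 1 : ℕ) : ℝ) := by exact_mod_cast h1
    have h3 : ((2 ^ (k-1) - 1 : ℕ) : ℝ) = (2:ℝ)^(k-1) - 1 := by
      have : (1:ℕ) ≤ 2 ^ (k-1) := Nat.one_le_two_pow
      push_cast [this]
      ring
    rw [h3, hpow21] at h2
    linarith
  -- the exponent bound
  have hγCδ : γ * (C k) ^ δ = θ k * m + θ k * z := by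
    have hsplit : (C k) ^ δ * c = C k := by
      rw [hc_def, ← Real.rpow_add hCkpos]
      norm_num
    have h1 : θ k * C k = γ * (C k) ^ δ := by
      rw [hθk, div_mul_eq_mul_div, div_eq_iff (ne_of_gt hc0), mul_assoc, hsplit]
    rw [← h1, hCk]
    ring
  have hθW : θ k ^ 2 * W = γ ^ 2 := by
    rw [← hc2W]
    calc θ k ^ 2 * c ^ 2 = (θ k * c) ^ 2 := by ring
      _ = γ ^ 2 := by rw [hθc]
  have hAeq : γ ^ 2 * Real.exp γ * M * z / (W * μ) = 2 ^ (k-2) * (θ k ^ 2 * Real.exp γ * M) := by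
    rw [← hθW, hz_def, div_eq_iff (ne_of_gt (mul_pos hWpos hμ))]
    ring
  have hBeq : 4 * (z / μ) * q = 4 * 2 ^ (k-2) * q := by
    rw [hz_def, mul_comm μ ((2:ℝ)^(k-2)), mul_div_assoc, div_self (ne_of_gt hμ), mul_one]
  have htψ : (t:ℝ) * ψ k ≤ 2 ^ (k-2) * (θ k ^ 2 * Real.exp γ * M) + 4 * 2 ^ (k-2) * q := by
    have hpowpos : (0:ℝ) < 2 ^ (k-2) := by positivity
    have hrhs0 : 0 ≤ θ k ^ 2 * Real.exp γ * M / 2 + 2 * q := by positivity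
    have hn1' : (0:ℝ) ≤ 2 ^ (k-2) * (θ k ^ 2 * Real.exp γ * M) := by positivity
    have hn2' : (0:ℝ) ≤ 4 * 2 ^ (k-2) * q := by
      apply mul_nonneg (by positivity) hq0
    rcases le_or_gt (ψ k) 0 with hψ0 | hψ0
    · have : (t:ℝ) * ψ k ≤ 0 := mul_nonpos_of_nonneg_of_nonpos (Nat.cast_nonneg t) hψ0
      linarith
    · have h1 : (t:ℝ) * ψ k ≤ (2 * 2 ^ (k-2)) * ψ k := by
        apply mul_le_mul_of_nonneg_right ht_high hψ0.le
      have h2 : (2 * 2 ^ (k-2)) * ψ k ≤ (2 * 2 ^ (k-2)) * (θ k ^ 2 * Real.exp γ * M / 2 + 2 * q) := by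
        apply mul_le_mul_of_nonneg_left hψub (by positivity)
      have h3 : (2 * 2 ^ (k-2)) * (θ k ^ 2 * Real.exp γ * M / 2 + 2 * q)
          = 2 ^ (k-2) * (θ k ^ 2 * Real.exp γ * M) + 4 * 2 ^ (k-2) * q := by ring
      linarith
  have hμt : z ≤ μ * t := by
    rw [hz_def]
    exact mul_le_mul_of_nonneg_left ht_low hμ.le
  have hexp_arg : -(θ k) * Sraw t ω + (t:ℝ) * ψ k ≤
      -γ * (C k) ^ δ + γ ^ 2 * Real.exp γ * M * z / (W * μ) + 4 * (z / μ) * q := by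
    have h0 : θ k * (μ * t + m) ≤ θ k * Sraw t ω := mul_le_mul_of_nonneg_left hS.le hθpos.le
    have h1 : θ k * (μ * ↑t) + θ k * m ≤ θ k * Sraw t ω := by
      have : θ k * (μ * ↑t + m) = θ k * (μ * ↑t) + θ k * m := by ring
      linarith [this ▸ h0]
    have h2 : θ k * z ≤ θ k * (μ * ↑t) := mul_le_mul_of_nonneg_left hμt hθpos.le
    rw [hAeq, hBeq]
    linarith [htψ, hγCδ]
  -- apply hCI2 with j = k - 2
  have hkey := hCI2 (k - 2)
  rw [show m + μ * 2 ^ (k-2) = C k from by rw [hCk, hz_def],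
    show μ * 2 ^ (k-2) + m = C k from by rw [hCk, hz_def]; ring] at hkey
  rw [← hW_def, ← hc_def, ← hq_def] at hkey
  rw [show (μ * 2 ^ (k-2) : ℝ) = z from hz_def.symm] at hkey
  have hexp_le : Real.exp (-(θ k) * Sraw t ω + (t:ℝ) * ψ k) ≤
      (α - 1) * (m + 1) ^ (α - 1) * (1 + 2 * z + m) ^ (-α) * z / 3 :=
    le_trans (Real.exp_le_exp.mpr hexp_arg) hkey
  -- lower bound on g k
  have hα1 : (0:ℝ) < α - 1 := by linarith
  have hgk := hg k hk
  rw [hnk1, hnk, hn1] at hgk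
  push_cast at hgk
  rw [show m + μ * (1:ℝ) = m + μ from by ring] at hgk
  set a : ℝ := m + μ * 2 ^ (k-2) with ha_def
  set b : ℝ := m + μ * 2 ^ (k-1) with hb_def
  have ha0 : (0:ℝ) ≤ a := by rw [ha_def]; positivity
  have hb0 : (0:ℝ) ≤ b := by rw [hb_def]; positivity
  have hd0 : (0:ℝ) ≤ m + μ := by linarith
  have hGa : Gbar a = (1 + a) ^ (1 - α) / (α - 1) := by rw [hG]; exact aux_Gbar α a hα ha0
  have hGb : Gbar b = (1 + b) ^ (1 - α) / (α - 1) := by rw [hG]; exact aux_Gbar α b hα hb0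
  have hGd : Gbar (m + μ) = (1 + (m + μ)) ^ (1 - α) / (α - 1) := by
    rw [hG]; exact aux_Gbar α (m + μ) hα hd0
  have hba : (1 + b) - (1 + a) = z := by
    rw [ha_def, hb_def, hz_def, hpow21]; ring
  have hab : a ≤ b := by linarith [hba, hzpos]
  have hnum : z * (1 + b) ^ (-α) ≤ Gbar a - Gbar b := by
    have h0 := aux_rpow_diff α (1 + a) (1 + b) hα (by linarith) (by linarith)
    rw [hba] at h0
    rw [hGa, hGb, div_sub_div_same]
    exact h0
  have hbpos : (0:ℝ) < 1 + b := by linarith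
  have hNpos : 0 < z * (1 + b) ^ (-α) := by
    have := Real.rpow_pos_of_pos hbpos (-α)
    positivity
  have hGdpos : 0 < Gbar (m + μ) := by
    rw [hGd]
    have := Real.rpow_pos_of_pos (show (0:ℝ) < 1 + (m + μ) by linarith) (1 - α)
    positivity
  have hGdinv : (Gbar (m + μ))⁻¹ = (α - 1) * (1 + (m + μ)) ^ (α - 1) := by
    rw [hGd, show (1:ℝ) - α = -(α - 1) from by ring,
      Real.rpow_neg (show (0:ℝ) ≤ 1 + (m + μ) by linarith)]
    have hne : ((1:ℝ) + (m + μ)) ^ (α - 1) ≠ 0 :=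
      ne_of_gt (Real.rpow_pos_of_pos (by linarith) _)
    field_simp
  have hglow : z * (1 + b) ^ (-α) * ((α - 1) * (1 + (m + μ)) ^ (α - 1)) ≤ g k := by
    rw [hgk, div_eq_mul_inv, hGdinv]
    apply mul_le_mul_of_nonneg_right hnum
    positivity
  have hmono : (m + 1) ^ (α - 1) ≤ (1 + (m + μ)) ^ (α - 1) :=
    Real.rpow_le_rpow (by linarith) (by linarith) (by linarith)
  have h1b : (1:ℝ) + 2 * z + m = 1 + b := by
    rw [hb_def, hz_def, hpow21]; ring
  have h3R : (α - 1) * (m + 1) ^ (α - 1) * (1 + 2 * z + m) ^ (-α) * z ≤ g k := by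
    rw [h1b]
    have hpow_nonneg : (0:ℝ) ≤ (1 + b) ^ (-α) := (Real.rpow_pos_of_pos hbpos _).le
    have hcoef : (0:ℝ) ≤ (α - 1) * (1 + b) ^ (-α) * z :=
      mul_nonneg (mul_nonneg hα1.le hpow_nonneg) hzpos.le
    calc (α - 1) * (m + 1) ^ (α - 1) * (1 + b) ^ (-α) * z
        = ((α - 1) * (1 + b) ^ (-α) * z) * (m + 1) ^ (α - 1) := by ring
      _ ≤ ((α - 1) * (1 + b) ^ (-α) * z) * (1 + (m + μ)) ^ (α - 1) :=
          mul_le_mul_of_nonneg_left hmono hcoef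
      _ = z * (1 + b) ^ (-α) * ((α - 1) * (1 + (m + μ)) ^ (α - 1)) := by ring
      _ ≤ g k := hglow
  have h3Rpos : 0 < (α - 1) * (m + 1) ^ (α - 1) * (1 + 2 * z + m) ^ (-α) * z := by
    have p1 : (0:ℝ) < (m + 1) ^ (α - 1) := Real.rpow_pos_of_pos (by linarith) _
    have p2 : (0:ℝ) < (1 + 2 * z + m) ^ (-α) := Real.rpow_pos_of_pos (by linarith) _
    positivity
  have hgpos : 0 < g k := lt_of_lt_of_le h3Rpos h3R
  have hfin : 3 * Real.exp (-(θ k) * Sraw t ω + (t:ℝ) * ψ k) ≤ g k := by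
    calc 3 * Real.exp (-(θ k) * Sraw t ω + (t:ℝ) * ψ k)
        ≤ 3 * ((α - 1) * (m + 1) ^ (α - 1) * (1 + 2 * z + m) ^ (-α) * z / 3) := by linarith
      _ = (α - 1) * (m + 1) ^ (α - 1) * (1 + 2 * z + m) ^ (-α) * z := by ring
      _ ≤ g k := h3R
  rw [div_le_one hgpos]
  exact hfin
end

section
/- Let X be a real random variable (with IID copies X_1, X_2, ...), μ > 0, m ≥ 1, δ ∈ (0, 1/2], α > 1, and n_k = 2^{k-1}. For k ≥ 2 let B_k = ∩_{j=1}^{n_k - 1} {X_j ≤ (μ n_{k-1} + m)^{1-δ}} and g(k) = (Ḡ(m + μ n_{k-1}) - Ḡ(m + μ n_k))/Ḡ(m + μ n_1), where Ḡ(t) = ∫_t^∞ (1+s)^{-α} ds. Assume the inequality: sup over z ∈ {μ·2^k : k ≥ 0} of 6(1 + 2z + m)^α P(X > (z + m)^{1-δ}) / ((α - 1)(m + 1)^{α-1} μ) ≤ 1. Then 3 P(B_k^c)/g(k) ≤ 1 for every k ≥ 2. -/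
open MeasureTheory ProbabilityTheory Filter Set
open scoped ENNReal

private lemma Gbar_closed {α : ℝ} (hα : 1 < α) {t : ℝ} (ht : 0 ≤ t) :
    ∫ s in Set.Ioi t, (1 + s) ^ (-α) = (1 + t) ^ (1 - α) / (α - 1) := by
  have h1t : (0:ℝ) < 1 + t := by linarith
  have hpe : MeasurePreserving (fun s : ℝ => 1 + s) volume volume :=
    measurePreserving_add_left volume 1
  have hemb : MeasurableEmbedding (fun s : ℝ => 1 + s) :=
    (MeasurableEquiv.addLeft (1:ℝ)).measurableEmbedding
  have hpre : (fun s : ℝ => 1 + s) ⁻¹' Set.Ioi (1 + t) = Set.Ioi t := by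
    ext x; simp
  have hmap := hpe.setIntegral_preimage_emb hemb (fun u => u ^ (-α)) (Set.Ioi (1 + t))
  rw [hpre] at hmap
  rw [hmap, integral_Ioi_rpow_of_lt (by linarith) h1t]
  rw [show -α + 1 = 1 - α by ring]
  have hne : (1:ℝ) - α ≠ 0 := by linarith
  have hne2 : α - 1 ≠ 0 := by linarith
  field_simp
  ring

private lemma key_ineq {α a b : ℝ} (hα : 1 < α) (ha : 0 < a) (hab : a ≤ b) :
    (α - 1) * (b - a) * b ^ (-α) ≤ a ^ (1 - α) - b ^ (1 - α) := by
  have hb : 0 < b := lt_of_lt_of_le ha hab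
  have hnot : (0:ℝ) ∉ Set.uIcc a b := by
    rw [Set.uIcc_of_le hab]
    intro h
    exact absurd (h.1) (by linarith)
  have h1 : a ^ (1 - α) - b ^ (1 - α) = (α - 1) * ∫ x in a..b, x ^ (-α) := by
    rw [integral_rpow (Or.inr ⟨by intro h; exact absurd h (by intro h'; linarith), hnot⟩)]
    rw [show -α + 1 = 1 - α by ring]
    have hne : (1:ℝ) - α ≠ 0 := by linarith
    field_simp
    ring
  rw [h1]
  have h2 : (b - a) * b ^ (-α) ≤ ∫ x in a..b, x ^ (-α) := by
    have hc : ∫ x in a..b, b ^ (-α) = (b - a) * b ^ (-α) := by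
      rw [intervalIntegral.integral_const]; simp [smul_eq_mul]
    rw [← hc]
    apply intervalIntegral.integral_mono_on hab (intervalIntegrable_const)
      (intervalIntegral.intervalIntegrable_rpow (Or.inr hnot))
    intro x hx
    exact Real.rpow_le_rpow_of_nonpos (lt_of_lt_of_le ha hx.1) hx.2 (by linarith)
  calc (α - 1) * (b - a) * b ^ (-α) = (α-1) * ((b-a) * b ^ (-α)) := by ring
  _ ≤ (α - 1) * ∫ x in a..b, x ^ (-α) := mul_le_mul_of_nonneg_left h2 (by linarith)

set_option maxHeartbeats 1600000 in
/-- Lemma `3P(B_kᶜ)/g(k) ≤ 1`: under the parameter inequality (C_I_1),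
the complement of the no-big-jump event `B_k` satisfies `3 P(B_kᶜ)/g(k) ≤ 1` for `k ≥ 2`. -/
theorem three_prob_Bk_compl_le_g
    {Ω : Type*} [MeasurableSpace Ω] (P : Measure Ω) [IsProbabilityMeasure P]
    (X : ℕ → Ω → ℝ) (hmeas : ∀ i, Measurable (X i))
    (hindep : iIndepFun X P)
    (hident : ∀ i, 1 ≤ i → IdentDistrib (X i) (X 1) P P)
    (μ m δ α : ℝ) (hμ : 0 < μ) (hm : 1 ≤ m)
    (hδ0 : 0 < δ) (hδ : δ ≤ 1 / 2) (hα : 1 < α)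
    (n : ℕ → ℕ) (hn : ∀ k, 1 ≤ k → n k = 2 ^ (k - 1))
    (Gbar : ℝ → ℝ) (hG : ∀ t, Gbar t = ∫ s in Set.Ioi t, (1 + s) ^ (-α))
    (g : ℕ → ℝ)
    (hg : ∀ k, 2 ≤ k →
      g k = (Gbar (m + μ * n (k - 1)) - Gbar (m + μ * n k)) / Gbar (m + μ * n 1))
    (B : ℕ → Set Ω)
    (hB : ∀ k, B k =
      ⋂ j ∈ Finset.Icc 1 (n k - 1), {ω | X j ω ≤ (μ * n (k - 1) + m) ^ (1 - δ)})
    (hCI1 : ∀ j : ℕ,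
      6 * (1 + 2 * (μ * 2 ^ j) + m) ^ α *
          (P {ω | X 1 ω > (μ * 2 ^ j + m) ^ (1 - δ)}).toReal /
        ((α - 1) * (m + 1) ^ (α - 1) * μ) ≤ 1) :
    ∀ k, 2 ≤ k → 3 * (P ((B k)ᶜ)).toReal / g k ≤ 1 := by
  intro k hk
  have hα1 : (0:ℝ) < α - 1 := by linarith
  have hK : (0:ℝ) < 2 ^ (k - 2) := by positivity
  have hnk : (n k : ℝ) = 2 * 2 ^ (k - 2) := by
    rw [hn k (by omega)]
    push_cast
    rw [show k - 1 = (k - 2) + 1 by omega]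
    ring
  have hnk1 : (n (k - 1) : ℝ) = 2 ^ (k - 2) := by
    rw [hn (k - 1) (by omega), show k - 1 - 1 = k - 2 by omega]
    push_cast
    ring
  have hn1 : (n 1 : ℝ) = 1 := by rw [hn 1 le_rfl]; norm_num
  -- abbreviations (as plain terms)
  have hapos : (0:ℝ) < 1 + (m + μ * 2 ^ (k - 2)) := by positivity
  have hbpos : (0:ℝ) < 1 + (m + μ * (2 * 2 ^ (k - 2))) := by positivity
  have hWpos : (0:ℝ) < 1 + (m + μ) := by positivity
  have hab : 1 + (m + μ * 2 ^ (k - 2)) < 1 + (m + μ * (2 * 2 ^ (k - 2))) := by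
    have : μ * 2 ^ (k - 2) < μ * (2 * 2 ^ (k - 2)) := by nlinarith
    linarith
  -- closed form of g k
  have hgk : g k = ((1 + (m + μ * 2 ^ (k - 2))) ^ (1 - α)
        - (1 + (m + μ * (2 * 2 ^ (k - 2)))) ^ (1 - α))
      / (1 + (m + μ)) ^ (1 - α) := by
    rw [hg k hk, hnk, hnk1, hn1, mul_one, hG, hG, hG,
      Gbar_closed hα (by positivity), Gbar_closed hα (by positivity),
      Gbar_closed hα (by positivity)]
    have hW0 : ((1:ℝ) + (m + μ)) ^ (1 - α) ≠ 0 := (Real.rpow_pos_of_pos hWpos _).ne'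
    have hne2 : α - 1 ≠ 0 := by linarith
    field_simp
  -- union bound
  have hBc : (B k)ᶜ
      = ⋃ j ∈ Finset.Icc 1 (n k - 1), {ω | X j ω > (μ * 2 ^ (k - 2) + m) ^ (1 - δ)} := by
    rw [hB k, Set.compl_iInter₂]
    refine Set.iUnion₂_congr fun j hj => ?_
    ext ω
    simp only [Set.mem_compl_iff, Set.mem_setOf_eq, not_le, hnk1, gt_iff_lt]
  have hPBc : P ((B k)ᶜ)
      ≤ (↑(n k - 1) : ENNReal) * P {ω | X 1 ω > (μ * 2 ^ (k - 2) + m) ^ (1 - δ)} := by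
    rw [hBc]
    refine le_trans (measure_biUnion_finset_le _ _) ?_
    have heq : ∀ j ∈ Finset.Icc 1 (n k - 1),
        P {ω | X j ω > (μ * 2 ^ (k - 2) + m) ^ (1 - δ)}
        = P {ω | X 1 ω > (μ * 2 ^ (k - 2) + m) ^ (1 - δ)} := by
      intro j hj
      have hj1 : 1 ≤ j := (Finset.mem_Icc.mp hj).1
      have := (hident j hj1).measure_mem_eq
        (measurableSet_Ioi (a := (μ * 2 ^ (k - 2) + m) ^ (1 - δ)))
      simpa [Set.preimage, Set.mem_Ioi] using this
    rw [Finset.sum_congr rfl heq, Finset.sum_const, Nat.card_Icc]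
    simp [nsmul_eq_mul]
  set q : ℝ := (P {ω | X 1 ω > (μ * 2 ^ (k - 2) + m) ^ (1 - δ)}).toReal with hqdef
  have hq0 : 0 ≤ q := ENNReal.toReal_nonneg
  have hP2 : (P ((B k)ᶜ)).toReal ≤ 2 * 2 ^ (k - 2) * q := by
    have hfin : (↑(n k - 1) : ENNReal) * P {ω | X 1 ω > (μ * 2 ^ (k - 2) + m) ^ (1 - δ)} ≠ ⊤ :=
      ENNReal.mul_ne_top (ENNReal.natCast_ne_top _) (measure_ne_top _ _)
    have h1 := ENNReal.toReal_mono hfin hPBc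
    rw [ENNReal.toReal_mul, ENNReal.toReal_natCast] at h1
    have h2 : ((n k - 1 : ℕ) : ℝ) ≤ ((n k : ℕ) : ℝ) := Nat.cast_le.mpr (Nat.sub_le _ _)
    calc (P ((B k)ᶜ)).toReal ≤ ((n k - 1 : ℕ) : ℝ) * q := h1
    _ ≤ (n k : ℝ) * q := mul_le_mul_of_nonneg_right h2 hq0
    _ = 2 * 2 ^ (k - 2) * q := by rw [hnk]
  -- parameter inequality
  have hD : (0:ℝ) < (α - 1) * (m + 1) ^ (α - 1) * μ := by positivity
  have hCI := hCI1 (k - 2)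
  rw [div_le_one hD] at hCI
  rw [show 1 + 2 * (μ * 2 ^ (k - 2)) + m = 1 + (m + μ * (2 * 2 ^ (k - 2))) by ring] at hCI
  -- key positivity facts
  have hbEpos : (0:ℝ) < (1 + (m + μ * (2 * 2 ^ (k - 2)))) ^ (-α) := Real.rpow_pos_of_pos hbpos _
  have hbApos : (0:ℝ) < (1 + (m + μ * (2 * 2 ^ (k - 2)))) ^ α := Real.rpow_pos_of_pos hbpos _
  have hWp : (0:ℝ) < (1 + (m + μ)) ^ (α - 1) := Real.rpow_pos_of_pos hWpos _
  have hbE : (1 + (m + μ * (2 * 2 ^ (k - 2)))) ^ α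
      * (1 + (m + μ * (2 * 2 ^ (k - 2)))) ^ (-α) = 1 := by
    rw [← Real.rpow_add hbpos]
    simp
  have hMW : (m + 1) ^ (α - 1) ≤ (1 + (m + μ)) ^ (α - 1) :=
    Real.rpow_le_rpow (by linarith) (by linarith) (by linarith)
  -- key MVT-style inequality
  have hkey := key_ineq hα hapos hab.le
  rw [show 1 + (m + μ * (2 * 2 ^ (k - 2))) - (1 + (m + μ * 2 ^ (k - 2))) = μ * 2 ^ (k - 2)
    by ring] at hkey
  -- chain
  have s1 : 6 * q ≤ (α - 1) * (m + 1) ^ (α - 1) * μ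
      * (1 + (m + μ * (2 * 2 ^ (k - 2)))) ^ (-α) := by
    have t := mul_le_mul_of_nonneg_right hCI hbEpos.le
    nlinarith [t, hbE, hq0]
  have s2 : 6 * 2 ^ (k - 2) * q ≤ (α - 1) * (μ * 2 ^ (k - 2))
      * (1 + (m + μ * (2 * 2 ^ (k - 2)))) ^ (-α) * (1 + (m + μ)) ^ (α - 1) := by
    have t1 := mul_le_mul_of_nonneg_left s1 hK.le
    have t2 := mul_le_mul_of_nonneg_right hMW
      (show (0:ℝ) ≤ (α - 1) * μ * 2 ^ (k - 2)
        * (1 + (m + μ * (2 * 2 ^ (k - 2)))) ^ (-α) by positivity)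
    nlinarith [t1, t2]
  have s3 := mul_le_mul_of_nonneg_right hkey hWp.le
  -- positivity of g k
  have hBA : (1 + (m + μ * (2 * 2 ^ (k - 2)))) ^ (1 - α)
      < (1 + (m + μ * 2 ^ (k - 2))) ^ (1 - α) :=
    Real.rpow_lt_rpow_of_neg hapos hab (by linarith)
  have hgpos : 0 < g k := by
    rw [hgk]
    exact div_pos (by linarith) (Real.rpow_pos_of_pos hWpos _)
  rw [div_le_one hgpos, hgk]
  have hdiv : ((1 + (m + μ * 2 ^ (k - 2))) ^ (1 - α)
        - (1 + (m + μ * (2 * 2 ^ (k - 2)))) ^ (1 - α)) / (1 + (m + μ)) ^ (1 - α)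
      = ((1 + (m + μ * 2 ^ (k - 2))) ^ (1 - α)
        - (1 + (m + μ * (2 * 2 ^ (k - 2)))) ^ (1 - α)) * (1 + (m + μ)) ^ (α - 1) := by
    rw [div_eq_iff (Real.rpow_pos_of_pos hWpos (1 - α)).ne', mul_assoc,
      ← Real.rpow_add hWpos]
    rw [show α - 1 + (1 - α) = 0 by ring, Real.rpow_zero, mul_one]
  rw [hdiv]
  linarith [hP2, s2, s3]
end

section
/- Let X be a real random variable with E[X] = 0 and E|X|^{1+ε} < ∞ for some ε ∈ (0, 1). Let δ ∈ (0, 1), u > 0, γ > 0, and set θ = γ/u^{1-δ}. If E|X|^{1+ε}/u^{(1-δ)(1+ε)} ≤ 1/2, then E[exp(θX) | X ≤ u^{1-δ}] ≤ exp(A/u^{(1-δ)(1+ε)}) with A = ((γ²/2)·(e^γ/(1-ε)) + 2)·E|X|^{1+ε}. -/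
open MeasureTheory ProbabilityTheory Set

private lemma exp_quad_nonpos {y : ℝ} (hy : y ≤ 0) :
    Real.exp y ≤ 1 + y + y ^ 2 / 2 := by
  have hderiv : ∀ t : ℝ, HasDerivAt (fun t : ℝ => Real.exp t - (1 + t + t ^ 2 / 2))
      (Real.exp t - (1 + t)) t := by
    intro t
    have h1 : HasDerivAt (fun t : ℝ => 1 + t + t ^ 2 / 2) (1 + t) t := by
      have h := ((hasDerivAt_id t).const_add 1).add ((hasDerivAt_pow 2 t).div_const 2)
      refine h.congr_deriv ?_
      push_cast; ring
    exact (Real.hasDerivAt_exp t).sub h1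
  have hmono : Monotone (fun t : ℝ => Real.exp t - (1 + t + t ^ 2 / 2)) := by
    apply monotone_of_deriv_nonneg
    · exact fun t => (hderiv t).differentiableAt
    · intro t
      rw [(hderiv t).deriv]
      nlinarith [Real.add_one_le_exp t]
  have h := hmono hy
  simp only [Real.exp_zero] at h
  nlinarith [h]

private lemma exp_quad_nonneg {y : ℝ} (hy : 0 ≤ y) :
    Real.exp y ≤ 1 + y + y ^ 2 / 2 * Real.exp y := by
  have hderiv : ∀ t : ℝ, HasDerivAt (fun t : ℝ => (1 + t) * Real.exp (-t) + t ^ 2 / 2)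
      (t - t * Real.exp (-t)) t := by
    intro t
    have hexp : HasDerivAt (fun t : ℝ => Real.exp (-t)) (-Real.exp (-t)) t := by
      have h := (Real.hasDerivAt_exp (-t)).comp t ((hasDerivAt_id t).neg)
      refine h.congr_deriv ?_
      ring
    have hprod := (((hasDerivAt_id t).const_add 1)).mul hexp
    have hsq := (hasDerivAt_pow 2 t).div_const 2
    have h := hprod.add hsq
    refine h.congr_deriv ?_
    simp only [id]; push_cast; ring
  have hmono : Monotone (fun t : ℝ => (1 + t) * Real.exp (-t) + t ^ 2 / 2) := by
    apply monotone_of_deriv_nonneg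
    · exact fun t => (hderiv t).differentiableAt
    · intro t
      rw [(hderiv t).deriv]
      rcases le_or_gt 0 t with h | h
      · have : Real.exp (-t) ≤ 1 := by
          rw [← Real.exp_zero]; exact Real.exp_le_exp.mpr (by linarith)
        nlinarith
      · have : 1 ≤ Real.exp (-t) := by
          rw [← Real.exp_zero]; exact Real.exp_le_exp.mpr (by linarith)
        nlinarith
  have h := hmono hy
  simp only [neg_zero, Real.exp_zero] at h
  norm_num at h
  have hinv : Real.exp y * Real.exp (-y) = 1 := by
    rw [← Real.exp_add]; simp
  nlinarith [mul_le_mul_of_nonneg_left h (Real.exp_pos y).le, hinv]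

private lemma exp_le_quad {γ y : ℝ} (hγ : 0 < γ) (hy : y ≤ γ) :
    Real.exp y ≤ 1 + y + y ^ 2 / 2 * Real.exp γ := by
  rcases le_or_gt y 0 with h | h
  · have h1 := exp_quad_nonpos h
    have h2 : (1:ℝ) ≤ Real.exp γ := Real.one_le_exp hγ.le
    nlinarith [sq_nonneg y]
  · have h1 := exp_quad_nonneg h.le
    have h2 : Real.exp y ≤ Real.exp γ := Real.exp_le_exp.mpr hy
    nlinarith [sq_nonneg y]

private lemma pointwise_bound {γ M ε x : ℝ} (hγ : 0 < γ) (hM : 0 < M)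
    (hε0 : 0 < ε) (hε1 : ε < 1) (hx : x ≤ M) :
    Real.exp (γ / M * x) ≤ 1 + γ / M * x +
      (γ ^ 2 * Real.exp γ / 2 + 2) * (|x| ^ (1 + ε) / M ^ (1 + ε)) := by
  have ht0 : 0 ≤ |x| / M := div_nonneg (abs_nonneg x) hM.le
  have htp : |x| ^ (1 + ε) / M ^ (1 + ε) = (|x| / M) ^ (1 + ε) :=
    (Real.div_rpow (abs_nonneg x) hM.le _).symm
  rw [htp]
  set t := |x| / M with htdef
  have hKnn : (0:ℝ) ≤ γ ^ 2 * Real.exp γ / 2 + 2 := by positivity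
  have htpnn : 0 ≤ t ^ (1 + ε) := Real.rpow_nonneg ht0 _
  rcases le_or_gt (-M) x with hge | hlt
  · have habs : |x| ≤ M := abs_le.mpr ⟨hge, hx⟩
    have ht1 : t ≤ 1 := (div_le_one hM).mpr habs
    have hy : γ / M * x ≤ γ := by
      have h := mul_le_mul_of_nonneg_left hx (le_of_lt (div_pos hγ hM))
      rwa [div_mul_cancel₀ γ hM.ne'] at h
    have h1 := exp_le_quad hγ hy
    have hsq : (γ / M * x) ^ 2 = γ ^ 2 * t ^ 2 := by
      rw [htdef, mul_pow, div_pow, div_pow, sq_abs]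
      ring
    have h2 : t ^ (2:ℕ) ≤ t ^ (1 + ε) := by
      rcases eq_or_lt_of_le ht0 with h0 | h0
      · rw [← h0, Real.zero_rpow (by positivity)]
        norm_num
      · calc t ^ (2:ℕ) = t ^ ((2:ℕ):ℝ) := (Real.rpow_natCast t 2).symm
          _ ≤ t ^ (1 + ε) := Real.rpow_le_rpow_of_exponent_ge h0 ht1 (by push_cast; linarith)
    have h3 : γ ^ 2 * Real.exp γ / 2 * t ^ 2 ≤ (γ ^ 2 * Real.exp γ / 2 + 2) * t ^ (1 + ε) := by
      have hc : (0:ℝ) ≤ γ ^ 2 * Real.exp γ / 2 := by positivity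
      calc γ ^ 2 * Real.exp γ / 2 * t ^ 2 ≤ γ ^ 2 * Real.exp γ / 2 * t ^ (1 + ε) :=
            mul_le_mul_of_nonneg_left h2 hc
        _ ≤ _ := mul_le_mul_of_nonneg_right (by linarith) htpnn
    calc Real.exp (γ / M * x) ≤ 1 + γ / M * x + (γ / M * x) ^ 2 / 2 * Real.exp γ := h1
      _ = 1 + γ / M * x + γ ^ 2 * Real.exp γ / 2 * t ^ 2 := by rw [hsq]; ring
      _ ≤ 1 + γ / M * x + (γ ^ 2 * Real.exp γ / 2 + 2) * t ^ (1 + ε) := by linarith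
  · have hxneg : x < 0 := by linarith
    have habs : |x| = -x := abs_of_neg hxneg
    have ht1 : 1 ≤ t := by
      rw [htdef, le_div_iff₀ hM, one_mul, habs]; linarith
    have hexp1 : Real.exp (γ / M * x) ≤ 1 := by
      rw [← Real.exp_zero]
      exact Real.exp_le_exp.mpr (mul_nonpos_of_nonneg_of_nonpos (by positivity) hxneg.le)
    have hlin : -(γ / M * x) = γ * t := by
      rw [htdef, habs]
      field_simp
    have hγK : γ ≤ γ ^ 2 * Real.exp γ / 2 + 2 := by
      nlinarith [sq_nonneg (γ - 1), mul_nonneg (sq_nonneg γ)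
        (sub_nonneg.mpr (Real.one_le_exp hγ.le))]
    have htt : t ≤ t ^ (1 + ε) := by
      calc t = t ^ (1:ℝ) := (Real.rpow_one t).symm
        _ ≤ t ^ (1 + ε) := Real.rpow_le_rpow_of_exponent_le ht1 (by linarith)
    have h3 : γ * t ≤ (γ ^ 2 * Real.exp γ / 2 + 2) * t ^ (1 + ε) := by
      calc γ * t ≤ γ * t ^ (1 + ε) := mul_le_mul_of_nonneg_left htt hγ.le
        _ ≤ _ := mul_le_mul_of_nonneg_right hγK htpnn
    linarith

set_option maxHeartbeats 1000000 in
/-- truncated-tilted mgf bound, `1+ε` moments: if `E X = 0`,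
`E|X|^{1+ε} < ∞` and `E|X|^{1+ε}/u^{(1-δ)(1+ε)} ≤ 1/2`, then with `θ = γ/u^{1-δ}`,
`E[exp(θX) | X ≤ u^{1-δ}] ≤ exp(A/u^{(1-δ)(1+ε)})` where
`A = ((γ²/2)·(e^γ/(1-ε)) + 2)·E|X|^{1+ε}`. -/
theorem truncated_tilted_mgf_bound_eps_moment
    {Ω : Type*} [MeasurableSpace Ω] (P : Measure Ω) [IsProbabilityMeasure P]
    (X : Ω → ℝ) (hX : Measurable X)
    (hint : Integrable X P) (hmean : ∫ ω, X ω ∂P = 0)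
    (ε : ℝ) (hε0 : 0 < ε) (hε1 : ε < 1)
    (hmom : Integrable (fun ω => |X ω| ^ (1 + ε)) P)
    (δ u γ θ : ℝ) (hδ0 : 0 < δ) (hδ1 : δ < 1) (hu : 0 < u) (hγ : 0 < γ)
    (hθ : θ = γ / u ^ (1 - δ))
    (hhalf : (∫ ω, |X ω| ^ (1 + ε) ∂P) / u ^ ((1 - δ) * (1 + ε)) ≤ 1 / 2) :
    (∫ ω in {ω | X ω ≤ u ^ (1 - δ)}, Real.exp (θ * X ω) ∂P) /
        (P {ω | X ω ≤ u ^ (1 - δ)}).toReal ≤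
      Real.exp ((((γ ^ 2 / 2) * (Real.exp γ / (1 - ε)) + 2) *
          ∫ ω, |X ω| ^ (1 + ε) ∂P) / u ^ ((1 - δ) * (1 + ε))) := by
  subst hθ
  set M := u ^ (1 - δ) with hMdef
  have hM : 0 < M := Real.rpow_pos_of_pos hu _
  have hMp : 0 < M ^ (1 + ε) := Real.rpow_pos_of_pos hM _
  have hup : u ^ ((1 - δ) * (1 + ε)) = M ^ (1 + ε) := by
    rw [hMdef, ← Real.rpow_mul hu.le]
  rw [hup] at hhalf ⊢
  clear_value M
  set m := ∫ ω, |X ω| ^ (1 + ε) ∂P with hmdef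
  have hm0 : 0 ≤ m := by
    rw [hmdef]
    exact integral_nonneg fun ω => Real.rpow_nonneg (abs_nonneg _) _
  set p := m / M ^ (1 + ε) with hpdef
  have hp0 : 0 ≤ p := by rw [hpdef]; exact div_nonneg hm0 hMp.le
  have hp2 : p ≤ 1 / 2 := hhalf
  clear_value m
  clear_value p
  set S := {ω | X ω ≤ M} with hSdef
  have hSmeas : MeasurableSet S := by
    rw [hSdef]; exact measurableSet_le hX measurable_const
  have hSmem : ∀ ω, ω ∈ S → X ω ≤ M := by intro ω hω; rw [hSdef] at hω; exact hω
  have hScmem : ∀ ω, ω ∈ Sᶜ → M < X ω := by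
    intro ω hω; rw [hSdef] at hω; exact not_le.mp hω
  clear_value S
  set g := fun ω => |X ω| ^ (1 + ε) / M ^ (1 + ε) with hgdef
  have hgint : Integrable g P := by rw [hgdef]; exact hmom.div_const _
  have hgnn : ∀ ω, 0 ≤ g ω := by
    intro ω; rw [hgdef]
    exact div_nonneg (Real.rpow_nonneg (abs_nonneg _) _) hMp.le
  have hgp : ∫ ω, g ω ∂P = p := by
    rw [hgdef, hpdef, hmdef, integral_div]
  have hgone : ∀ ω, ω ∈ Sᶜ → (1:ℝ) ≤ g ω := by
    intro ω hω
    have hXω : M < X ω := hScmem ω hω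
    rw [hgdef]
    rw [le_div_iff₀ hMp, one_mul]
    exact Real.rpow_le_rpow hM.le (le_trans hXω.le (le_abs_self _)) (by linarith)
  clear_value g
  set b := (P Sᶜ).toReal with hbdef
  have hb0 : 0 ≤ b := by rw [hbdef]; exact ENNReal.toReal_nonneg
  have hsb : (P S).toReal = 1 - b := by
    have h1 : P S + P Sᶜ = 1 := by
      rw [measure_add_measure_compl hSmeas, measure_univ]
    have h2 : (P S).toReal + b = 1 := by
      rw [hbdef, ← ENNReal.toReal_add (measure_ne_top P S) (measure_ne_top P Sᶜ), h1]
      simp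
    linarith
  clear_value b
  set K := γ ^ 2 * Real.exp γ / 2 + 2 with hKdef
  have hK2 : (2:ℝ) ≤ K := by
    rw [hKdef]
    nlinarith [mul_nonneg (sq_nonneg γ) (Real.exp_pos γ).le]
  clear_value K
  -- integrability of exp on S
  have hexp_int : IntegrableOn (fun ω => Real.exp (γ / M * X ω)) S P := by
    apply Integrable.mono' (integrable_const (Real.exp γ))
    · exact ((hX.const_mul _).exp).aestronglyMeasurable.restrict
    · rw [ae_restrict_iff' hSmeas]
      filter_upwards with ω hω
      rw [Real.norm_eq_abs, abs_of_pos (Real.exp_pos _)]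
      apply Real.exp_le_exp.mpr
      have h := mul_le_mul_of_nonneg_left (hSmem ω hω) (le_of_lt (div_pos hγ hM))
      rwa [div_mul_cancel₀ γ hM.ne'] at h
  -- integrability pieces
  have i1 : IntegrableOn (fun _ : Ω => (1:ℝ)) S P := (integrable_const 1).integrableOn
  have i2 : IntegrableOn (fun ω => γ / M * X ω) S P := (hint.const_mul _).integrableOn
  have i3 : IntegrableOn (fun ω => K * g ω) S P := (hgint.const_mul _).integrableOn
  have i12 : IntegrableOn (fun ω => 1 + γ / M * X ω) S P := i1.add i2
  have i123 : IntegrableOn (fun ω => 1 + γ / M * X ω + K * g ω) S P := i12.add i3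
  -- numerator bound
  have hnum : ∫ ω in S, Real.exp (γ / M * X ω) ∂P ≤
      ∫ ω in S, (1 + γ / M * X ω + K * g ω) ∂P := by
    apply setIntegral_mono_on hexp_int i123 hSmeas
    intro ω hω
    have h := pointwise_bound (M := M) hγ hM hε0 hε1 (hSmem ω hω)
    rw [hgdef, hKdef]
    exact h
  have hsplit : ∫ ω in S, (1 + γ / M * X ω + K * g ω) ∂P
      = (P S).toReal + (γ / M) * ∫ ω in S, X ω ∂P + K * ∫ ω in S, g ω ∂P := by
    rw [integral_add i12 i3, integral_add i1 i2, setIntegral_const,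
      integral_const_mul, integral_const_mul]
    simp [smul_eq_mul, measureReal_def]
  -- linear term nonpositive
  have hXS : ∫ ω in S, X ω ∂P ≤ 0 := by
    have hadd := integral_add_compl hSmeas hint
    rw [hmean] at hadd
    have hcompl : 0 ≤ ∫ ω in Sᶜ, X ω ∂P := by
      apply setIntegral_nonneg hSmeas.compl
      intro ω hω
      linarith [hScmem ω hω]
    linarith
  -- ∫_S g ≤ p - b
  have hgcompl : b ≤ ∫ ω in Sᶜ, g ω ∂P := by
    have hmono : ∫ _ in Sᶜ, (1:ℝ) ∂P ≤ ∫ ω in Sᶜ, g ω ∂P :=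
      setIntegral_mono_on ((integrable_const 1).integrableOn)
        (hgint.integrableOn) hSmeas.compl hgone
    rw [setIntegral_const, smul_eq_mul, mul_one, measureReal_def, ← hbdef] at hmono
    exact hmono
  have hgS : ∫ ω in S, g ω ∂P ≤ p - b := by
    have hadd := integral_add_compl hSmeas hgint
    rw [hgp] at hadd
    linarith
  have hbp : b ≤ p := by
    have h1 : ∫ ω in Sᶜ, g ω ∂P ≤ p := by
      rw [← hgp]
      exact setIntegral_le_integral hgint (Filter.Eventually.of_forall hgnn)
    linarith
  have hb12 : b ≤ 1 / 2 := hbp.trans hp2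
  have h1b : 0 < 1 - b := by linarith
  -- combine numerator
  have hnum2 : ∫ ω in S, Real.exp (γ / M * X ω) ∂P ≤ (1 - b) + K * (p - b) := by
    have hKnn : (0:ℝ) ≤ K := by linarith
    have h1 : K * ∫ ω in S, g ω ∂P ≤ K * (p - b) := mul_le_mul_of_nonneg_left hgS hKnn
    have h2 : (γ / M) * ∫ ω in S, X ω ∂P ≤ 0 :=
      mul_nonpos_of_nonneg_of_nonpos (by positivity) hXS
    calc ∫ ω in S, Real.exp (γ / M * X ω) ∂P ≤ _ := hnum
      _ = (P S).toReal + (γ / M) * ∫ ω in S, X ω ∂P + K * ∫ ω in S, g ω ∂P := hsplit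
      _ ≤ (1 - b) + K * (p - b) := by rw [hsb]; linarith
  -- final numeric step
  have hfin : ((1 - b) + K * (p - b)) / (1 - b) ≤ Real.exp (K * p) := by
    rw [div_le_iff₀ h1b]
    have e1 : 1 + K * (p - b) ≤ Real.exp (K * (p - b)) := by
      linarith [Real.add_one_le_exp (K * (p - b))]
    have e2 : 1 ≤ Real.exp (2 * b) * (1 - b) := by
      nlinarith [Real.add_one_le_exp (2 * b)]
    have e3 : Real.exp (K * (p - b)) * Real.exp (2 * b) ≤ Real.exp (K * p) := by
      rw [← Real.exp_add]
      apply Real.exp_le_exp.mpr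
      nlinarith [mul_le_mul_of_nonneg_right hK2 hb0]
    have c1 : Real.exp (K * (p - b)) ≤
        Real.exp (K * (p - b)) * (Real.exp (2 * b) * (1 - b)) :=
      le_mul_of_one_le_right (Real.exp_pos _).le e2
    have c2 : Real.exp (K * (p - b)) * (Real.exp (2 * b) * (1 - b))
        = Real.exp (K * (p - b)) * Real.exp (2 * b) * (1 - b) := by ring
    have c3 : Real.exp (K * (p - b)) * Real.exp (2 * b) * (1 - b)
        ≤ Real.exp (K * p) * (1 - b) := mul_le_mul_of_nonneg_right e3 h1b.le
    linarith
  -- exponent comparison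
  have hKA : Real.exp (K * p) ≤ Real.exp ((((γ ^ 2 / 2) * (Real.exp γ / (1 - ε)) + 2) * m)
      / M ^ (1 + ε)) := by
    apply Real.exp_le_exp.mpr
    rw [mul_div_assoc, ← hpdef]
    apply mul_le_mul_of_nonneg_right _ hp0
    rw [hKdef]
    have h1ε : (0:ℝ) < 1 - ε := by linarith
    have h4 : Real.exp γ ≤ Real.exp γ / (1 - ε) := by
      rw [le_div_iff₀ h1ε]
      nlinarith [Real.exp_pos γ]
    nlinarith [mul_le_mul_of_nonneg_left h4 (sq_nonneg γ)]
  -- conclude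
  have hdiv : (∫ ω in S, Real.exp (γ / M * X ω) ∂P) / (P S).toReal
      ≤ ((1 - b) + K * (p - b)) / (1 - b) := by
    rw [hsb]
    gcongr
  exact hdiv.trans (hfin.trans hKA)
end

section
/- Let X be a real random variable with E[X] = 0 and E[X²] < ∞. Let δ ∈ (0, 1), u > 0, γ > 0, and set θ = γ/u^{1-δ}. If E[X²]/u^{2(1-δ)} ≤ 1/2, then E[exp(θX) | X ≤ u^{1-δ}] ≤ exp(γ² e^γ E[X²]/(2u^{2(1-δ)}) + 2P(X > u^{1-δ})) ≤ exp(A/u^{2(1-δ)}) with A = (γ² e^γ/2 + 2)·E[X²]. -/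
open MeasureTheory ProbabilityTheory Set

lemma exp_quad_aux {γ : ℝ} (hγ : 0 ≤ γ) {x : ℝ} (hx : x ≤ γ) :
    Real.exp x ≤ 1 + x + x ^ 2 * Real.exp γ / 2 := by
  set f : ℝ → ℝ := fun y => 1 + y + y ^ 2 * (Real.exp γ / 2) - Real.exp y with hf
  have hderiv : ∀ y : ℝ, HasDerivAt f (1 + y * Real.exp γ - Real.exp y) y := by
    intro y
    have h1 : HasDerivAt (fun y : ℝ => 1 + y) 1 y := (hasDerivAt_id y).const_add 1
    have h2 : HasDerivAt (fun y : ℝ => y ^ 2 * (Real.exp γ / 2))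
        ((2 * y ^ 1) * (Real.exp γ / 2)) y := (hasDerivAt_pow 2 y).mul_const _
    have := (h1.add h2).sub (Real.hasDerivAt_exp y)
    convert this using 1
    · rfl
    · rfl
    · rfl
    ring
  have hdf : ∀ y : ℝ, deriv f y = 1 + y * Real.exp γ - Real.exp y := fun y => (hderiv y).deriv
  have hcont : Continuous f := by
    have : Differentiable ℝ f := fun y => (hderiv y).differentiableAt
    exact this.continuous
  have hf0 : f 0 = 0 := by simp [hf]
  have key : 0 ≤ f x := by
    rcases le_total x 0 with h0 | h0
    · have hanti : AntitoneOn f (Iic 0) := by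
        apply antitoneOn_of_deriv_nonpos (convex_Iic 0) hcont.continuousOn
          (fun y _ => ((hderiv y).differentiableAt).differentiableWithinAt)
        intro y hy
        rw [interior_Iic] at hy
        rw [hdf]
        have h1 : y + 1 ≤ Real.exp y := Real.add_one_le_exp y
        have h2 : y * Real.exp γ ≤ y * 1 := by
          apply mul_le_mul_of_nonpos_left _ (le_of_lt hy)
          exact Real.one_le_exp hγ
        linarith
      have := hanti (mem_Iic.2 h0) (mem_Iic.2 le_rfl) h0
      rw [hf0] at this
      linarith
    · have hmono : MonotoneOn f (Icc 0 γ) := by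
        apply monotoneOn_of_deriv_nonneg (convex_Icc 0 γ) hcont.continuousOn
          (fun y _ => ((hderiv y).differentiableAt).differentiableWithinAt)
        intro y hy
        rw [interior_Icc] at hy
        obtain ⟨hy0, hyγ⟩ := hy
        rw [hdf]
        have h1 : (-y) + 1 ≤ Real.exp (-y) := Real.add_one_le_exp (-y)
        have h2 : Real.exp y * Real.exp (-y) = 1 := by
          rw [← Real.exp_add]; simp
        have h3 : Real.exp y ≤ Real.exp γ := Real.exp_le_exp.2 hyγ.le
        have h4 : 0 < Real.exp y := Real.exp_pos y
        -- exp y ≤ 1 + y * exp y ≤ 1 + y * exp γ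
        nlinarith [mul_le_mul_of_nonneg_left h1 h4.le, mul_le_mul_of_nonneg_left h3 hy0.le]
      have := hmono (mem_Icc.2 ⟨le_rfl, hγ⟩) (mem_Icc.2 ⟨h0, hx⟩) h0
      rw [hf0] at this
      linarith
  simp only [hf] at key
  linarith

/-- truncated-tilted mgf bound, finite variance: if `E X = 0`,
`E X² < ∞` and `E X²/u^{2(1-δ)} ≤ 1/2`, then with `θ = γ/u^{1-δ}`,
`E[exp(θX) | X ≤ u^{1-δ}] ≤ exp(γ² e^γ E X²/(2u^{2(1-δ)}) + 2 P(X > u^{1-δ}))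
≤ exp(A/u^{2(1-δ)})` with `A = (γ² e^γ/2 + 2)·E X²`. -/
theorem truncated_tilted_mgf_bound_finite_variance
    {Ω : Type*} [MeasurableSpace Ω] (P : Measure Ω) [IsProbabilityMeasure P]
    (X : Ω → ℝ) (hX : Measurable X)
    (hint : Integrable X P) (hmean : ∫ ω, X ω ∂P = 0)
    (hsq : Integrable (fun ω => (X ω) ^ 2) P)
    (δ u γ θ : ℝ) (hδ0 : 0 < δ) (hδ1 : δ < 1) (hu : 0 < u) (hγ : 0 < γ)
    (hθ : θ = γ / u ^ (1 - δ))
    (hhalf : (∫ ω, (X ω) ^ 2 ∂P) / u ^ (2 * (1 - δ)) ≤ 1 / 2) :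
    (∫ ω in {ω | X ω ≤ u ^ (1 - δ)}, Real.exp (θ * X ω) ∂P) /
        (P {ω | X ω ≤ u ^ (1 - δ)}).toReal ≤
      Real.exp (γ ^ 2 * Real.exp γ * (∫ ω, (X ω) ^ 2 ∂P) / (2 * u ^ (2 * (1 - δ))) +
        2 * (P {ω | X ω > u ^ (1 - δ)}).toReal) ∧
    Real.exp (γ ^ 2 * Real.exp γ * (∫ ω, (X ω) ^ 2 ∂P) / (2 * u ^ (2 * (1 - δ))) +
        2 * (P {ω | X ω > u ^ (1 - δ)}).toReal) ≤
      Real.exp (((γ ^ 2 * Real.exp γ / 2 + 2) * ∫ ω, (X ω) ^ 2 ∂P) /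
        u ^ (2 * (1 - δ))) := by
  have ht : 0 < u ^ (1 - δ) := Real.rpow_pos_of_pos hu _
  set t : ℝ := u ^ (1 - δ) with htdef
  have ht2 : u ^ (2 * (1 - δ)) = t ^ 2 := by
    rw [htdef, show (2 : ℝ) * (1 - δ) = (1 - δ) * 2 by ring, Real.rpow_mul hu.le,
      show ((2 : ℝ)) = ((2 : ℕ) : ℝ) by norm_num, Real.rpow_natCast]
  set I : ℝ := ∫ ω, (X ω) ^ 2 ∂P with hI
  have hI0 : 0 ≤ I := integral_nonneg fun ω => sq_nonneg _
  have hθ0 : 0 < θ := by rw [hθ]; positivity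
  set S : Set Ω := {ω | X ω ≤ t} with hS
  have hSm : MeasurableSet S := measurableSet_le hX measurable_const
  set p : ℝ := (P {ω | X ω > t}).toReal with hp
  have hp0 : 0 ≤ p := ENNReal.toReal_nonneg
  -- Chebyshev
  have hhalf' : I / t ^ 2 ≤ 1 / 2 := by rwa [ht2] at hhalf
  have hcheb : p ≤ I / t ^ 2 := by
    have key := mul_meas_ge_le_integral_of_nonneg
      (μ := P) (f := fun ω => (X ω) ^ 2) (ae_of_all _ fun ω => sq_nonneg _) hsq (t ^ 2)
    have hsub : {ω | X ω > t} ⊆ {ω | t ^ 2 ≤ (X ω) ^ 2} := by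
      intro ω hω
      simp only [mem_setOf_eq] at *
      nlinarith
    have hm : p ≤ (P {ω | t ^ 2 ≤ (X ω) ^ 2}).toReal :=
      ENNReal.toReal_mono (measure_ne_top P _) (measure_mono hsub)
    have ht2pos : (0 : ℝ) < t ^ 2 := by positivity
    rw [le_div_iff₀ ht2pos]
    calc p * t ^ 2 = t ^ 2 * p := by ring
      _ ≤ t ^ 2 * (P {ω | t ^ 2 ≤ (X ω) ^ 2}).toReal := by
          exact mul_le_mul_of_nonneg_left hm ht2pos.le
      _ ≤ I := key
  have hph : p ≤ 1 / 2 := hcheb.trans hhalf'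
  -- P(S) = 1 - p
  have hcompl : Sᶜ = {ω | X ω > t} := by
    ext ω; simp [hS, not_le]
  have hPSp : (P S).toReal = 1 - p := by
    have h1 : P S + P Sᶜ = 1 := by
      rw [measure_add_measure_compl hSm, measure_univ]
    have h2 : (P S).toReal + p = 1 := by
      rw [hp, ← hcompl, ← ENNReal.toReal_add (measure_ne_top P _) (measure_ne_top P _), h1,
        ENNReal.toReal_one]
    linarith
  -- pointwise bound on S
  have hbound : ∀ ω ∈ S, Real.exp (θ * X ω) ≤ 1 + θ * X ω + (θ * X ω) ^ 2 * Real.exp γ / 2 := by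
    intro ω hω
    apply exp_quad_aux hγ.le
    have : θ * X ω ≤ θ * t := mul_le_mul_of_nonneg_left hω hθ0.le
    calc θ * X ω ≤ θ * t := this
      _ = γ := by rw [hθ]; field_simp
  -- integrability
  have hIexp : IntegrableOn (fun ω => Real.exp (θ * X ω)) S P := by
    apply Integrable.mono' (integrable_const (Real.exp γ))
      ((hX.const_mul θ).exp.aestronglyMeasurable)
    rw [ae_restrict_iff' hSm]
    filter_upwards with ω hω
    rw [Real.norm_eq_abs, abs_of_pos (Real.exp_pos _)]
    apply Real.exp_le_exp.2
    have : θ * X ω ≤ θ * t := mul_le_mul_of_nonneg_left hω hθ0.le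
    calc θ * X ω ≤ θ * t := this
      _ = γ := by rw [hθ]; field_simp
  have hquad_eq : (fun ω => 1 + θ * X ω + (θ * X ω) ^ 2 * Real.exp γ / 2)
      = fun ω => 1 + (θ * X ω + (θ ^ 2 * Real.exp γ / 2) * (X ω) ^ 2) := by
    funext ω; ring
  have hquadInt : Integrable (fun ω => 1 + θ * X ω + (θ * X ω) ^ 2 * Real.exp γ / 2) P := by
    rw [hquad_eq]
    exact (integrable_const 1).add ((hint.const_mul θ).add (hsq.const_mul _))
  -- main integral bound
  have hmono := setIntegral_mono_on hIexp hquadInt.integrableOn hSm hbound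
  have hsplit : ∫ ω in S, (1 + θ * X ω + (θ * X ω) ^ 2 * Real.exp γ / 2) ∂P
      = (P S).toReal + (θ * ∫ ω in S, X ω ∂P
        + (θ ^ 2 * Real.exp γ / 2) * ∫ ω in S, (X ω) ^ 2 ∂P) := by
    have hg1 : Integrable (fun ω => θ * X ω) P := hint.const_mul θ
    have hg2 : Integrable (fun ω => (θ ^ 2 * Real.exp γ / 2) * (X ω) ^ 2) P := hsq.const_mul _
    have hg : Integrable (fun ω => θ * X ω + (θ ^ 2 * Real.exp γ / 2) * (X ω) ^ 2) P :=
      hg1.add hg2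
    rw [hquad_eq, integral_add (integrable_const 1).integrableOn hg.integrableOn,
      integral_add hg1.integrableOn hg2.integrableOn,
      integral_const, integral_const_mul, integral_const_mul]
    simp [Measure.restrict_apply_univ, Measure.real]
  have hXS : ∫ ω in S, X ω ∂P ≤ 0 := by
    have hadd : (∫ ω in S, X ω ∂P) + ∫ ω in Sᶜ, X ω ∂P = 0 := by
      rw [integral_add_compl hSm hint, hmean]
    have hpos : 0 ≤ ∫ ω in Sᶜ, X ω ∂P := by
      apply setIntegral_nonneg hSm.compl
      intro ω hω
      rw [hcompl] at hω
      exact (ht.trans hω).le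
    linarith
  have hX2S : ∫ ω in S, (X ω) ^ 2 ∂P ≤ I :=
    setIntegral_le_integral hsq (ae_of_all _ fun ω => sq_nonneg _)
  set c : ℝ := γ ^ 2 * Real.exp γ * I / (2 * u ^ (2 * (1 - δ))) with hc
  have hcval : (θ ^ 2 * Real.exp γ / 2) * I = c := by
    rw [hc, ht2, hθ, div_pow]
    ring
  have hPS1 : (P S).toReal ≤ 1 := by rw [hPSp]; linarith
  have hnum : ∫ ω in S, Real.exp (θ * X ω) ∂P ≤ Real.exp c := by
    have h1 : ∫ ω in S, Real.exp (θ * X ω) ∂P ≤ 1 + c := by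
      rw [← hcval]
      have h2 : (θ ^ 2 * Real.exp γ / 2) * ∫ ω in S, (X ω) ^ 2 ∂P
          ≤ (θ ^ 2 * Real.exp γ / 2) * I :=
        mul_le_mul_of_nonneg_left hX2S (by positivity)
      have h3 : θ * ∫ ω in S, X ω ∂P ≤ 0 :=
        mul_nonpos_of_nonneg_of_nonpos hθ0.le hXS
      calc ∫ ω in S, Real.exp (θ * X ω) ∂P
          ≤ (P S).toReal + (θ * ∫ ω in S, X ω ∂P
            + (θ ^ 2 * Real.exp γ / 2) * ∫ ω in S, (X ω) ^ 2 ∂P) := hsplit ▸ hmono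
        _ ≤ 1 + (θ ^ 2 * Real.exp γ / 2) * I := by linarith
    have h4 : c + 1 ≤ Real.exp c := Real.add_one_le_exp c
    linarith
  -- denominator bound
  have hden : Real.exp (-(2 * p)) ≤ (P S).toReal := by
    rw [hPSp]
    have h1 : 2 * p + 1 ≤ Real.exp (2 * p) := Real.add_one_le_exp _
    have h2 : Real.exp (-(2 * p)) * Real.exp (2 * p) = 1 := by
      rw [← Real.exp_add]; simp
    have h3 : (0 : ℝ) < Real.exp (-(2 * p)) := Real.exp_pos _
    nlinarith [mul_le_mul_of_nonneg_left h1 h3.le]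
  have hgoal1 : (∫ ω in S, Real.exp (θ * X ω) ∂P) / (P S).toReal ≤ Real.exp (c + 2 * p) := by
    have := div_le_div₀ (Real.exp_pos c).le hnum (Real.exp_pos (-(2 * p))) hden
    calc (∫ ω in S, Real.exp (θ * X ω) ∂P) / (P S).toReal
        ≤ Real.exp c / Real.exp (-(2 * p)) := this
      _ = Real.exp (c + 2 * p) := by rw [← Real.exp_sub]; ring_nf
  refine ⟨hgoal1, ?_⟩
  apply Real.exp_le_exp.2
  rw [hc, ht2]
  have heq : ((γ ^ 2 * Real.exp γ / 2 + 2) * I) / t ^ 2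
      = γ ^ 2 * Real.exp γ * I / (2 * t ^ 2) + 2 * (I / t ^ 2) := by
    field_simp
  linarith [heq, mul_le_mul_of_nonneg_left hcheb (by norm_num : (0:ℝ) ≤ 2)]
end

section
/- Let X be a real random variable with E[X] = 0 and E|X|^{1+ε} < ∞ for some ε ∈ (0, 1). Let γ > 0, u ≥ 1, 0 < δ ≤ ε/2, and set θ = γ/u^{1-δ}. If E|X|^{1+ε}/u^{(1-δ)(1+ε)} ≤ 1/2, then E[exp(θX) | X ≤ u^{1-δ}] ≤ exp(A/u) with A = ((γ²/2)·(e^γ/(1-ε)) + 2)·E|X|^{1+ε}. -/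
open MeasureTheory ProbabilityTheory Set

/-- For `t ≤ 0`, `exp t ≤ 1 + t + t²/2`. -/
lemma aux_exp_le_quad_nonpos {t : ℝ} (ht : t ≤ 0) :
    Real.exp t ≤ 1 + t + t ^ 2 / 2 := by
  have key : ∀ x : ℝ, HasDerivAt (fun x : ℝ => Real.exp x - (1 + x + x ^ 2 / 2))
      (Real.exp x - (1 + x)) x := by
    intro x
    have h1 : HasDerivAt (fun x : ℝ => 1 + x + x ^ 2 / 2) (1 + x) x := by
      have := (((hasDerivAt_id x).const_add 1).add ((hasDerivAt_pow 2 x).div_const 2))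
      refine this.congr_deriv ?_
      push_cast; ring
    exact (Real.hasDerivAt_exp x).sub h1
  have hmono : Monotone (fun x : ℝ => Real.exp x - (1 + x + x ^ 2 / 2)) := by
    apply monotone_of_deriv_nonneg (fun x => (key x).differentiableAt)
    intro x
    rw [(key x).deriv]
    have := Real.add_one_le_exp x
    linarith
  have h := hmono ht
  simp only [Real.exp_zero] at h
  nlinarith [h]

/-- For `t ≥ 0`, `exp t ≤ 1 + t + (t²/2)·exp t`. -/
lemma aux_exp_le_quad_exp_nonneg {t : ℝ} (ht : 0 ≤ t) :
    Real.exp t ≤ 1 + t + t ^ 2 / 2 * Real.exp t := by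
  have key : ∀ x : ℝ, HasDerivAt (fun x : ℝ => (1 + x) * Real.exp (-x) + x ^ 2 / 2)
      (Real.exp (-x) + (1 + x) * (-Real.exp (-x)) + x) x := by
    intro x
    have hexp : HasDerivAt (fun x : ℝ => Real.exp (-x)) (-Real.exp (-x)) x := by
      have := (Real.hasDerivAt_exp (-x)).comp x (hasDerivAt_neg x)
      simpa [mul_comm, Function.comp_def] using this
    have h1 : HasDerivAt (fun x : ℝ => (1 + x) * Real.exp (-x))
        (1 * Real.exp (-x) + (1 + x) * (-Real.exp (-x))) x :=
      (((hasDerivAt_id x).const_add 1)).mul hexp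
    have h2 : HasDerivAt (fun x : ℝ => x ^ 2 / 2) x x := by
      have := (hasDerivAt_pow 2 x).div_const 2
      refine this.congr_deriv ?_
      push_cast; ring
    have := h1.add h2
    refine this.congr_deriv ?_
    ring
  have hmono : MonotoneOn (fun x : ℝ => (1 + x) * Real.exp (-x) + x ^ 2 / 2) (Set.Ici 0) := by
    apply monotoneOn_of_deriv_nonneg (convex_Ici 0)
    · exact Continuous.continuousOn (by continuity)
    · exact fun x _ => (key x).differentiableAt.differentiableWithinAt
    · intro x hx
      rw [interior_Ici] at hx
      rw [(key x).deriv]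
      have h1 : Real.exp (-x) ≤ 1 := Real.exp_le_one_iff.mpr (by linarith [le_of_lt (Set.mem_Ioi.mp hx)])
      have h2 : 0 < Real.exp (-x) := Real.exp_pos _
      nlinarith [le_of_lt (Set.mem_Ioi.mp hx)]
  have h := hmono (Set.self_mem_Ici) (Set.mem_Ici.mpr ht) ht
  simp only [Real.exp_zero, neg_zero] at h
  -- h : 1 ≤ (1 + t) * exp (-t) + t^2/2
  have hpos : 0 < Real.exp t := Real.exp_pos t
  have hid : Real.exp (-t) * Real.exp t = 1 := by
    rw [← Real.exp_add]; simp
  nlinarith [h, hpos, hid]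

/-- Key pointwise bound: for `t ≤ γ`,
`exp t ≤ 1 + t + max 1 (γ^{1-ε} e^γ / 2) · |t|^{1+ε}`. -/
lemma aux_key_pointwise {γ ε t : ℝ} (hγ : 0 < γ) (hε0 : 0 < ε) (hε1 : ε < 1) (ht : t ≤ γ) :
    Real.exp t ≤ 1 + t + max 1 (γ ^ (1 - ε) * Real.exp γ / 2) * |t| ^ (1 + ε) := by
  set c := max 1 (γ ^ (1 - ε) * Real.exp γ / 2) with hc
  have hc1 : (1 : ℝ) ≤ c := le_max_left _ _
  have hc2 : γ ^ (1 - ε) * Real.exp γ / 2 ≤ c := le_max_right _ _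
  rcases le_or_gt 0 t with htpos | htneg
  · rcases eq_or_lt_of_le htpos with h0 | h0
    · rw [← h0, abs_zero, Real.zero_rpow (by positivity : (1:ℝ) + ε ≠ 0)]
      simp
    · -- 0 < t ≤ γ
      have habs : |t| = t := abs_of_pos h0
      have hB := aux_exp_le_quad_exp_nonneg htpos
      have ht2 : t ^ 2 = t ^ (1 + ε : ℝ) * t ^ (1 - ε : ℝ) := by
        rw [← Real.rpow_add h0]
        norm_num
      have h1 : t ^ (1 - ε : ℝ) ≤ γ ^ (1 - ε : ℝ) :=
        Real.rpow_le_rpow htpos ht (by linarith)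
      have h2 : Real.exp t ≤ Real.exp γ := Real.exp_le_exp.mpr ht
      have h3 : t ^ 2 / 2 * Real.exp t ≤ c * t ^ (1 + ε : ℝ) := by
        rw [ht2]
        have htp : (0 : ℝ) ≤ t ^ (1 + ε : ℝ) := Real.rpow_nonneg htpos _
        have h4 : t ^ (1 - ε : ℝ) * Real.exp t ≤ γ ^ (1 - ε : ℝ) * Real.exp γ := by
          apply mul_le_mul h1 h2 (Real.exp_pos t).le (Real.rpow_nonneg hγ.le _)
        calc t ^ (1 + ε : ℝ) * t ^ (1 - ε : ℝ) / 2 * Real.exp t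
            = t ^ (1 + ε : ℝ) * (t ^ (1 - ε : ℝ) * Real.exp t / 2) := by ring
          _ ≤ t ^ (1 + ε : ℝ) * (γ ^ (1 - ε : ℝ) * Real.exp γ / 2) := by
              apply mul_le_mul_of_nonneg_left (by linarith) htp
          _ ≤ t ^ (1 + ε : ℝ) * c := mul_le_mul_of_nonneg_left hc2 htp
          _ = c * t ^ (1 + ε : ℝ) := mul_comm _ _
      rw [habs]
      linarith
  · -- t < 0
    have habs : |t| = -t := abs_of_neg htneg
    have habspos : 0 < |t| := abs_pos.mpr (ne_of_lt htneg)
    have hup : |t| ^ (1 + ε : ℝ) ≤ c * |t| ^ (1 + ε : ℝ) := by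
      nlinarith [Real.rpow_nonneg (abs_nonneg t) (1 + ε)]
    have hsuff : Real.exp t ≤ 1 + t + |t| ^ (1 + ε : ℝ) := by
      rcases le_or_gt (-1) t with hge | hlt
      · have hA := aux_exp_le_quad_nonpos htneg.le
        have habsle1 : |t| ≤ 1 := by rw [habs]; linarith
        have ht2 : |t| ^ 2 = |t| ^ (1 + ε : ℝ) * |t| ^ (1 - ε : ℝ) := by
          rw [← Real.rpow_add habspos]
          norm_num
        have h1 : |t| ^ (1 - ε : ℝ) ≤ 1 :=
          Real.rpow_le_one (abs_nonneg t) habsle1 (by linarith)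
        have h2 : t ^ 2 / 2 ≤ |t| ^ (1 + ε : ℝ) := by
          have hsq : t ^ 2 = |t| ^ 2 := (sq_abs t).symm
          rw [hsq, ht2]
          nlinarith [Real.rpow_nonneg (abs_nonneg t) (1 + ε)]
        linarith
      · have h1 : Real.exp t ≤ 1 := Real.exp_le_one_iff.mpr htneg.le
        have habsge1 : 1 ≤ |t| := by rw [habs]; linarith
        have h2 : |t| ≤ |t| ^ (1 + ε : ℝ) := by
          calc |t| = |t| ^ (1 : ℝ) := (Real.rpow_one _).symm
            _ ≤ |t| ^ (1 + ε : ℝ) :=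
                Real.rpow_le_rpow_of_exponent_le habsge1 (by linarith)
        linarith
    linarith

/-- Scalar inequality: `c·γ^{1+ε} + 3/2 ≤ (γ²/2)(e^γ/(1-ε)) + 2`. -/
lemma aux_scalar {γ ε : ℝ} (hγ : 0 < γ) (hε0 : 0 < ε) (hε1 : ε < 1) :
    max 1 (γ ^ (1 - ε) * Real.exp γ / 2) * γ ^ (1 + ε : ℝ) + 3 / 2 ≤
      γ ^ 2 / 2 * (Real.exp γ / (1 - ε)) + 2 := by
  have hγp : (0 : ℝ) ≤ γ ^ (1 + ε : ℝ) := Real.rpow_nonneg hγ.le _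
  have hγ2 : γ ^ (1 - ε : ℝ) * γ ^ (1 + ε : ℝ) = γ ^ 2 := by
    rw [← Real.rpow_add hγ]
    norm_num
  have h1ε : (0 : ℝ) < 1 - ε := by linarith
  have hexpγ : 1 + γ ≤ Real.exp γ := by linarith [Real.add_one_le_exp γ]
  have hmain : max 1 (γ ^ (1 - ε) * Real.exp γ / 2) * γ ^ (1 + ε : ℝ) ≤
      γ ^ 2 / 2 * (Real.exp γ / (1 - ε)) + 1 / 2 := by
    rw [max_mul_of_nonneg _ _ hγp]
    apply max_le
    · -- γ^{1+ε} ≤ γ²e^γ/2 + 1/2 ≤ RHS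
      have hbase : γ ^ (1 + ε : ℝ) ≤ γ ^ 2 * Real.exp γ / 2 + 1 / 2 := by
        rcases le_or_gt γ 1 with hle | hgt
        · have h1 : γ ^ (1 + ε : ℝ) ≤ γ ^ (1 : ℝ) :=
            Real.rpow_le_rpow_of_exponent_ge hγ hle (by linarith)
          rw [Real.rpow_one] at h1
          nlinarith [sq_nonneg (γ - 1), Real.exp_pos γ, hexpγ]
        · have h1 : γ ^ (1 + ε : ℝ) ≤ γ ^ (2 : ℝ) :=
            Real.rpow_le_rpow_of_exponent_le hgt.le (by linarith)
          rw [show (2 : ℝ) = ((2 : ℕ) : ℝ) by norm_num, Real.rpow_natCast] at h1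
          nlinarith [hexpγ]
      have h2 : γ ^ 2 * Real.exp γ / 2 ≤ γ ^ 2 / 2 * (Real.exp γ / (1 - ε)) := by
        rw [div_mul_div_comm, mul_comm (γ^2) (Real.exp γ)]
        apply div_le_div_of_nonneg_left (by positivity) (by positivity) (by nlinarith)
      linarith
    · have heq : γ ^ (1 - ε : ℝ) * Real.exp γ / 2 * γ ^ (1 + ε : ℝ) =
          γ ^ 2 * Real.exp γ / 2 := by rw [← hγ2]; ring
      rw [heq]
      have h2 : γ ^ 2 * Real.exp γ / 2 ≤ γ ^ 2 / 2 * (Real.exp γ / (1 - ε)) := by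
        rw [div_mul_div_comm, mul_comm (γ^2) (Real.exp γ)]
        apply div_le_div_of_nonneg_left (by positivity) (by positivity) (by nlinarith)
      linarith
  linarith

/-- `1 ≤ (1-x)·exp(3x/2)` for `0 ≤ x ≤ 1/2`. -/
lemma aux_inv_bound {x : ℝ} (hx0 : 0 ≤ x) (hx : x ≤ 1 / 2) :
    1 ≤ (1 - x) * Real.exp (3 / 2 * x) := by
  have hy : (0 : ℝ) ≤ 3 / 2 * x := by linarith
  have hcube := Real.sum_le_exp_of_nonneg hy 4
  norm_num [Finset.sum_range_succ, Nat.factorial] at hcube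
  have h1x : (0:ℝ) ≤ 1 - x := by linarith
  have := mul_le_mul_of_nonneg_left hcube h1x
  nlinarith [this, sq_nonneg x, mul_nonneg (mul_nonneg hx0 hx0) hx0]

/-- truncated-tilted mgf bound, `u ≥ 1`, `δ ≤ ε/2`: under the hypotheses
of the `1+ε` moment bound together with `u ≥ 1` and `0 < δ ≤ ε/2`,
`E[exp(θX) | X ≤ u^{1-δ}] ≤ exp(A/u)` with `A = ((γ²/2)·(e^γ/(1-ε)) + 2)·E|X|^{1+ε}`. -/
theorem truncated_tilted_mgf_bound_over_u
    {Ω : Type*} [MeasurableSpace Ω] (P : Measure Ω) [IsProbabilityMeasure P]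
    (X : Ω → ℝ) (hX : Measurable X)
    (hint : Integrable X P) (hmean : ∫ ω, X ω ∂P = 0)
    (ε : ℝ) (hε0 : 0 < ε) (hε1 : ε < 1)
    (hmom : Integrable (fun ω => |X ω| ^ (1 + ε)) P)
    (δ u γ θ : ℝ) (hδ0 : 0 < δ) (hδε : δ ≤ ε / 2) (hu : 1 ≤ u) (hγ : 0 < γ)
    (hθ : θ = γ / u ^ (1 - δ))
    (hhalf : (∫ ω, |X ω| ^ (1 + ε) ∂P) / u ^ ((1 - δ) * (1 + ε)) ≤ 1 / 2) :
    (∫ ω in {ω | X ω ≤ u ^ (1 - δ)}, Real.exp (θ * X ω) ∂P) /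
        (P {ω | X ω ≤ u ^ (1 - δ)}).toReal ≤
      Real.exp ((((γ ^ 2 / 2) * (Real.exp γ / (1 - ε)) + 2) *
          ∫ ω, |X ω| ^ (1 + ε) ∂P) / u) := by
  have hu0 : (0 : ℝ) < u := lt_of_lt_of_le one_pos hu
  set v : ℝ := u ^ (1 - δ) with hv
  set m : ℝ := ∫ ω, |X ω| ^ (1 + ε) ∂P with hm
  set c : ℝ := max 1 (γ ^ (1 - ε) * Real.exp γ / 2) with hcdef
  have hc1 : (1 : ℝ) ≤ c := le_max_left _ _
  have h1δ : (0 : ℝ) < 1 - δ := by linarith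
  have hv1 : (1 : ℝ) ≤ v := Real.one_le_rpow hu h1δ.le
  have hv0 : (0 : ℝ) < v := lt_of_lt_of_le one_pos hv1
  have hθ0 : 0 < θ := by rw [hθ]; exact div_pos hγ hv0
  have hθv : θ * v = γ := by rw [hθ]; field_simp
  have hm0 : 0 ≤ m := integral_nonneg fun ω => Real.rpow_nonneg (abs_nonneg _) _
  -- v ^ (1+ε) = u ^ ((1-δ)(1+ε)) and u ≤ v^(1+ε)
  have hvpow : v ^ (1 + ε : ℝ) = u ^ ((1 - δ) * (1 + ε)) :=
    (Real.rpow_mul hu0.le (1 - δ) (1 + ε)).symm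
  have hvpow0 : (0 : ℝ) < v ^ (1 + ε : ℝ) := Real.rpow_pos_of_pos hv0 _
  have huv : u ≤ v ^ (1 + ε : ℝ) := by
    rw [hvpow]
    calc u = u ^ (1 : ℝ) := (Real.rpow_one u).symm
      _ ≤ u ^ ((1 - δ) * (1 + ε)) :=
          Real.rpow_le_rpow_of_exponent_le hu (by nlinarith)
  have hx : m / v ^ (1 + ε : ℝ) ≤ 1 / 2 := by rw [hvpow]; exact hhalf
  have hxpos : 0 ≤ m / v ^ (1 + ε : ℝ) := div_nonneg hm0 hvpow0.le
  have hms : MeasurableSet {ω | X ω ≤ v} := measurableSet_le hX measurable_const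
  -- Markov bound on the tail
  have hmarkov : (P {ω | v < X ω}).toReal ≤ m / v ^ (1 + ε : ℝ) := by
    have hsub : {ω | v < X ω} ⊆ {ω | v ^ (1 + ε : ℝ) ≤ |X ω| ^ (1 + ε : ℝ)} := by
      intro ω hω
      have : v ≤ |X ω| := le_trans (le_of_lt hω) (le_abs_self _)
      exact Real.rpow_le_rpow hv0.le this (by linarith)
    have h2 := mul_meas_ge_le_integral_of_nonneg
      (ae_of_all P fun ω => Real.rpow_nonneg (abs_nonneg (X ω)) (1 + ε)) hmom
      (v ^ (1 + ε : ℝ))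
    have h3 : (P {ω | v < X ω}).toReal ≤
        (P {ω | v ^ (1 + ε : ℝ) ≤ |X ω| ^ (1 + ε : ℝ)}).toReal := by
      apply ENNReal.toReal_mono (measure_ne_top P _) (measure_mono hsub)
    rw [le_div_iff₀ hvpow0, mul_comm]
    exact le_trans (mul_le_mul_of_nonneg_left h3 hvpow0.le) h2
  -- denominator lower bound
  have hD : 1 - m / v ^ (1 + ε : ℝ) ≤ (P {ω | X ω ≤ v}).toReal := by
    have hcompl : {ω | X ω ≤ v}ᶜ = {ω | v < X ω} := by ext ω; simp [not_le]
    have h1 := prob_compl_eq_one_sub (μ := P) hms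
    rw [hcompl] at h1
    have h2 : (P {ω | v < X ω}).toReal = 1 - (P {ω | X ω ≤ v}).toReal := by
      rw [h1, ENNReal.toReal_sub_of_le prob_le_one (by norm_num)]
      norm_num
    linarith [hmarkov, h2.symm.le, h2.le]
  have hDhalf : (1 : ℝ) / 2 ≤ (P {ω | X ω ≤ v}).toReal := by linarith
  have hDpos : (0 : ℝ) < (P {ω | X ω ≤ v}).toReal := by linarith
  -- numerator bound
  have hgint : Integrable (fun ω => (1 + θ * X ω) + c * θ ^ (1 + ε : ℝ) * |X ω| ^ (1 + ε : ℝ)) P :=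
    ((integrable_const 1).add (hint.const_mul θ)).add (hmom.const_mul _)
  have hN : (∫ ω in {ω | X ω ≤ v}, Real.exp (θ * X ω) ∂P) ≤
      1 + c * θ ^ (1 + ε : ℝ) * m := by
    have hNle : (∫ ω in {ω | X ω ≤ v}, Real.exp (θ * X ω) ∂P) ≤
        ∫ ω, (1 + θ * X ω) + c * θ ^ (1 + ε : ℝ) * |X ω| ^ (1 + ε : ℝ) ∂P := by
      rw [← integral_indicator hms]
      apply integral_mono_of_nonneg
      · exact ae_of_all P fun ω => Set.indicator_nonneg (fun ω _ => (Real.exp_pos _).le) ω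
      · exact hgint
      · apply ae_of_all P
        intro ω
        beta_reduce
        by_cases hω : X ω ≤ v
        · have hmem : ω ∈ {ω | X ω ≤ v} := hω
          rw [Set.indicator_of_mem hmem]
          have htγ : θ * X ω ≤ γ := by
            rw [← hθv]; exact mul_le_mul_of_nonneg_left hω hθ0.le
          have hkey := aux_key_pointwise hγ hε0 hε1 htγ
          have habs : |θ * X ω| ^ (1 + ε : ℝ) = θ ^ (1 + ε : ℝ) * |X ω| ^ (1 + ε : ℝ) := by
            rw [abs_mul, abs_of_pos hθ0, Real.mul_rpow hθ0.le (abs_nonneg _)]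
          rw [habs] at hkey
          calc Real.exp (θ * X ω) ≤ 1 + θ * X ω +
              c * (θ ^ (1 + ε : ℝ) * |X ω| ^ (1 + ε : ℝ)) := hkey
            _ = (1 + θ * X ω) + c * θ ^ (1 + ε : ℝ) * |X ω| ^ (1 + ε : ℝ) := by ring
        · have hmem : ω ∉ {ω | X ω ≤ v} := hω
          rw [Set.indicator_of_notMem hmem]
          push_neg at hω
          have h1 : 0 < X ω := lt_of_lt_of_le (lt_of_lt_of_le one_pos hv1) hω.le
          have h2 : 0 ≤ c * θ ^ (1 + ε : ℝ) * |X ω| ^ (1 + ε : ℝ) := by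
            apply mul_nonneg (mul_nonneg (by linarith) (Real.rpow_nonneg hθ0.le _))
              (Real.rpow_nonneg (abs_nonneg _) _)
          nlinarith [mul_pos hθ0 h1]
    have hgeq : ∫ ω, (1 + θ * X ω) + c * θ ^ (1 + ε : ℝ) * |X ω| ^ (1 + ε : ℝ) ∂P =
        1 + c * θ ^ (1 + ε : ℝ) * m := by
      have hi1 : Integrable (fun ω => 1 + θ * X ω) P :=
        (integrable_const 1).add (hint.const_mul θ)
      have hi2 : Integrable (fun ω => c * θ ^ (1 + ε : ℝ) * |X ω| ^ (1 + ε : ℝ)) P :=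
        hmom.const_mul _
      have e1 : ∫ ω, (1 + θ * X ω) + c * θ ^ (1 + ε : ℝ) * |X ω| ^ (1 + ε : ℝ) ∂P =
          (∫ ω, 1 + θ * X ω ∂P) + ∫ ω, c * θ ^ (1 + ε : ℝ) * |X ω| ^ (1 + ε : ℝ) ∂P :=
        integral_add hi1 hi2
      have e2 : ∫ ω, 1 + θ * X ω ∂P = (∫ _, (1 : ℝ) ∂P) + ∫ ω, θ * X ω ∂P :=
        integral_add (integrable_const 1) (hint.const_mul θ)
      rw [e1, e2, integral_const, integral_const_mul, integral_const_mul, hmean]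
      simp [hm]
    rw [hgeq] at hNle
    exact hNle
  -- combine
  have ha0 : 0 ≤ c * θ ^ (1 + ε : ℝ) * m :=
    mul_nonneg (mul_nonneg (by linarith) (Real.rpow_nonneg hθ0.le _)) hm0
  set a : ℝ := c * θ ^ (1 + ε : ℝ) * m with hadef
  set x : ℝ := m / v ^ (1 + ε : ℝ) with hxdef
  have hstep1 : (∫ ω in {ω | X ω ≤ v}, Real.exp (θ * X ω) ∂P) /
      (P {ω | X ω ≤ v}).toReal ≤ (1 + a) / (1 - x) := by
    apply div_le_div₀ (by linarith) hN (by linarith) hD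
  have hstep2 : (1 + a) / (1 - x) ≤ Real.exp (a + 3 / 2 * x) := by
    rw [div_le_iff₀ (by linarith : (0:ℝ) < 1 - x)]
    have h1 : 1 + a ≤ Real.exp a := by linarith [Real.add_one_le_exp a]
    have h2 : 1 ≤ (1 - x) * Real.exp (3 / 2 * x) := aux_inv_bound hxpos hx
    have h3 : Real.exp (a + 3 / 2 * x) = Real.exp a * Real.exp (3 / 2 * x) := Real.exp_add _ _
    calc 1 + a ≤ Real.exp a := h1
      _ = Real.exp a * 1 := (mul_one _).symm
      _ ≤ Real.exp a * ((1 - x) * Real.exp (3 / 2 * x)) :=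
          mul_le_mul_of_nonneg_left h2 (Real.exp_pos a).le
      _ = Real.exp (a + 3 / 2 * x) * (1 - x) := by rw [h3]; ring
  have hfinal : a + 3 / 2 * x ≤ ((γ ^ 2 / 2 * (Real.exp γ / (1 - ε)) + 2) * m) / u := by
    have hθpow : θ ^ (1 + ε : ℝ) = γ ^ (1 + ε : ℝ) / v ^ (1 + ε : ℝ) := by
      rw [hθ, Real.div_rpow hγ.le hv0.le]
    have haeq : a + 3 / 2 * x = (c * γ ^ (1 + ε : ℝ) + 3 / 2) * (m / v ^ (1 + ε : ℝ)) := by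
      rw [hadef, hxdef, hθpow]; ring
    have hmono : m / v ^ (1 + ε : ℝ) ≤ m / u := by
      apply div_le_div_of_nonneg_left hm0 hu0 huv
    have hcoef : (0 : ℝ) ≤ c * γ ^ (1 + ε : ℝ) + 3 / 2 := by
      have := Real.rpow_nonneg hγ.le (1 + ε)
      nlinarith
    have hscalar := aux_scalar hγ hε0 hε1
    calc a + 3 / 2 * x = (c * γ ^ (1 + ε : ℝ) + 3 / 2) * (m / v ^ (1 + ε : ℝ)) := haeq
      _ ≤ (c * γ ^ (1 + ε : ℝ) + 3 / 2) * (m / u) := mul_le_mul_of_nonneg_left hmono hcoef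
      _ ≤ (γ ^ 2 / 2 * (Real.exp γ / (1 - ε)) + 2) * (m / u) := by
          apply mul_le_mul_of_nonneg_right hscalar (div_nonneg hm0 hu0.le)
      _ = ((γ ^ 2 / 2 * (Real.exp γ / (1 - ε)) + 2) * m) / u := by ring
  calc (∫ ω in {ω | X ω ≤ v}, Real.exp (θ * X ω) ∂P) / (P {ω | X ω ≤ v}).toReal
      ≤ (1 + a) / (1 - x) := hstep1
    _ ≤ Real.exp (a + 3 / 2 * x) := hstep2
    _ ≤ Real.exp (((γ ^ 2 / 2 * (Real.exp γ / (1 - ε)) + 2) * m) / u) :=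
        Real.exp_le_exp.mpr hfinal
end

section
/- Let X be an integrable real random variable with E[X] = 0 such that P(X ∈ hℤ) < 1 for a given h > 0, and let μ ≥ h. Set c = E[h⌊X/h⌋], X' = h⌊X/h⌋ - c, and μ' = μ - c - h. Then c < 0, E[X'] = 0, μ' > 0, and almost surely X' - μ' ≥ X - μ; moreover X' takes values in a lattice of span h (shifted by -c). -/
open MeasureTheory ProbabilityTheory Set

/-- lattice domination coupling: for an integrable zero-mean `X` with
`P(X ∈ hℤ) < 1`, `h > 0` and `μ ≥ h`, setting `c = E[h⌊X/h⌋]`, `X' = h⌊X/h⌋ - c` and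
`μ' = μ - c - h`, one has `c < 0`, `E X' = 0`, `μ' > 0`, `X' - μ' ≥ X - μ` pathwise, and
`X'` takes values in the lattice `hℤ - c`. -/
theorem lattice_domination_coupling
    {Ω : Type*} [MeasurableSpace Ω] (P : Measure Ω) [IsProbabilityMeasure P]
    (X : Ω → ℝ) (hX : Measurable X)
    (hint : Integrable X P) (hmean : ∫ ω, X ω ∂P = 0)
    (h μ : ℝ) (hh : 0 < h) (hμ : h ≤ μ)
    (hlat : P {ω | ∃ z : ℤ, X ω = h * z} < 1)
    (c : ℝ) (hc : c = ∫ ω, h * (⌊X ω / h⌋ : ℝ) ∂P) :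
    c < 0 ∧
    (∫ ω, (h * (⌊X ω / h⌋ : ℝ) - c) ∂P) = 0 ∧
    0 < μ - c - h ∧
    (∀ ω, (h * (⌊X ω / h⌋ : ℝ) - c) - (μ - c - h) ≥ X ω - μ) ∧
    (∀ ω, ∃ z : ℤ, h * (⌊X ω / h⌋ : ℝ) - c = h * (z : ℝ) - c) := by
  have hYmeas : Measurable (fun ω => h * (⌊X ω / h⌋ : ℝ)) := by
    apply measurable_const.mul
    exact measurable_from_top.comp ((hX.div_const h).floor)
  have hYleX : ∀ ω, h * (⌊X ω / h⌋ : ℝ) ≤ X ω := by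
    intro ω
    have h1 := Int.floor_le (X ω / h)
    have h2 : h * (X ω / h) = X ω := by field_simp
    nlinarith
  have hXltY : ∀ ω, X ω < h * (⌊X ω / h⌋ : ℝ) + h := by
    intro ω
    have h1 := Int.lt_floor_add_one (X ω / h)
    have h2 : h * (X ω / h) = X ω := by field_simp
    nlinarith
  have hYint : Integrable (fun ω => h * (⌊X ω / h⌋ : ℝ)) P := by
    refine (hint.abs.add (integrable_const h)).mono hYmeas.aestronglyMeasurable ?_
    filter_upwards with ω
    have h1 := hYleX ω
    have h2 := hXltY ω
    simp only [Pi.add_apply, Real.norm_eq_abs]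
    rw [abs_of_nonneg (by positivity : (0:ℝ) ≤ |X ω| + h), abs_le]
    constructor
    · rcases abs_cases (X ω) with ⟨e1, e2⟩ | ⟨e1, e2⟩ <;> linarith
    · rcases abs_cases (X ω) with ⟨e1, e2⟩ | ⟨e1, e2⟩ <;> linarith
  have hsetEq : {ω | ∃ z : ℤ, X ω = h * z} = {ω | X ω = h * (⌊X ω / h⌋ : ℝ)} := by
    ext ω
    constructor
    · rintro ⟨z, hz⟩
      have : X ω / h = (z : ℝ) := by field_simp [hz]; exact hz
      simp only [Set.mem_setOf_eq, this, Int.floor_intCast]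
      linarith [hz]
    · intro hz
      exact ⟨⌊X ω / h⌋, hz⟩
  have hmsE : MeasurableSet {ω | X ω = h * (⌊X ω / h⌋ : ℝ)} :=
    measurableSet_eq_fun hX hYmeas
  have hDpos : 0 < ∫ ω, (X ω - h * (⌊X ω / h⌋ : ℝ)) ∂P := by
    have hDint : Integrable (fun ω => X ω - h * (⌊X ω / h⌋ : ℝ)) P := hint.sub hYint
    rw [integral_pos_iff_support_of_nonneg
      (f := fun ω => X ω - h * (⌊X ω / h⌋ : ℝ))
      (fun ω => by have := hYleX ω; simp; linarith) hDint]
    have hsupp : Function.support (fun ω => X ω - h * (⌊X ω / h⌋ : ℝ)) =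
        {ω | X ω = h * (⌊X ω / h⌋ : ℝ)}ᶜ := by
      ext ω
      simp [Function.support, sub_ne_zero]
    rw [hsupp, prob_compl_eq_one_sub hmsE, ← hsetEq]
    exact tsub_pos_of_lt hlat
  have hclt : c < 0 := by
    rw [hc]
    have := integral_sub hint hYint
    rw [hmean] at this
    have h0 : ∫ ω, (X ω - h * (⌊X ω / h⌋ : ℝ)) ∂P = -∫ ω, h * (⌊X ω / h⌋ : ℝ) ∂P := by
      rw [this]; ring
    rw [h0] at hDpos
    linarith
  refine ⟨hclt, ?_, by linarith, fun ω => by have := hXltY ω; simp only [ge_iff_le]; linarith,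
    fun ω => ⟨⌊X ω / h⌋, rfl⟩⟩
  rw [integral_sub hYint (integrable_const c), integral_const]
  simp [← hc]
end
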